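/- arXiv:1512.02376 — 2 statements merged into one kernel-verified Lean document; each statement's English description precedes it below -/
import Mathlib

section
/- Let in(𝒢_{D_{2m}}) denote the set consisting of the first-written monomial of each binomial of 𝒢_{D_{2m}} (namely the monomials x_{i,k}x_{j,ℓ}, x_{i,ℓ}x_{j,k} for i<j<k<ℓ in J; x_{i,j}x_{i,k}, x_j x_{i,k}, x_k x_{i,j}, x_{j,k}y_i, x_{i,k}y_j for i<j<k in J; x_i x_j, x_j y_i, x_{i,j}y_i, x_{i,j}x_1 x_n for i<j in J; and x_i x_1 x_n for i in J). If M and M′ are monomials of R such that no monomial of in(𝒢_{D_{2m}}) divides M and no monomial of in(𝒢_{D_{2m}}) divides M′, then π(M) = π(M′) implies M = M′. -/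
open MvPolynomial

/-- Index type for the variables of the polynomial ring `R` in the `D_{2m}` case (`n = 2m`).
The set `J = {3,5,…,n-1}` of odd integers is realised as `{2t+3 | t : Fin (m-1)}` and
`J^c = {2,4,…,n-2}` as `{2t+2 | t : Fin (m-1)}`.  The constructors are:
`x1 ↦ x_1`, `xn ↦ x_n`, `xJ t ↦ x_{2t+3}` (`2t+3 ∈ J`), `xJc t ↦ x_{2t+2}` (`2t+2 ∈ J^c`),
`xP s t _ ↦ x_{2s+3,2t+3}` (a pair `k < ℓ` in `J`), `y t ↦ y_{2t+3}`. -/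
inductive DVar (m : ℕ) : Type where
  | x1 : DVar m
  | xn : DVar m
  | xJ : Fin (m - 1) → DVar m
  | xJc : Fin (m - 1) → DVar m
  | xP : (s t : Fin (m - 1)) → s < t → DVar m
  | y : Fin (m - 1) → DVar m

/-- The images of the variables under `π`, where `u_i = X i` inside
`K[u_1,…,u_n] ⊆ MvPolynomial ℕ K`:
`π(x_1) = u_1²`, `π(x_n) = u_n²` (`n = 2m`), `π(x_i) = u_i²` for `i ∈ J`,
`π(x_j) = u_j` for `j ∈ J^c`, `π(x_{k,ℓ}) = u_k u_ℓ` for `k < ℓ` in `J`, and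
`π(y_i) = u_i u_1 u_n` for `i ∈ J`. -/
noncomputable def dImage (K : Type*) [Field K] (m : ℕ) : DVar m → MvPolynomial ℕ K
  | .x1 => X 1 ^ 2
  | .xn => X (2 * m) ^ 2
  | .xJ t => X (2 * t.val + 3) ^ 2
  | .xJc t => X (2 * t.val + 2)
  | .xP s t _ => X (2 * s.val + 3) * X (2 * t.val + 3)
  | .y t => X (2 * t.val + 3) * X 1 * X (2 * m)

/-- The toric map `π : R → K[u_1,…,u_n]` for the `D_{2m}` configuration. -/
noncomputable def piD (K : Type*) [Field K] (m : ℕ) :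
    MvPolynomial (DVar m) K →ₐ[K] MvPolynomial ℕ K :=
  aeval (dImage K m)

/-- The set `𝒢_{D_{2m}}` of binomials. -/
noncomputable def GD (K : Type*) [Field K] (m : ℕ) : Set (MvPolynomial (DVar m) K) :=
  {g | (∃ (i j k l : Fin (m - 1)) (hij : i < j) (hjk : j < k) (hkl : k < l),
          g = X (DVar.xP i k (hij.trans hjk)) * X (DVar.xP j l (hjk.trans hkl))
              - X (DVar.xP i j hij) * X (DVar.xP k l hkl) ∨
          g = X (DVar.xP i l (hij.trans (hjk.trans hkl))) * X (DVar.xP j k hjk)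
              - X (DVar.xP i j hij) * X (DVar.xP k l hkl)) ∨
      (∃ (i j k : Fin (m - 1)) (hij : i < j) (hjk : j < k),
          g = X (DVar.xP i j hij) * X (DVar.xP i k (hij.trans hjk))
              - X (DVar.xJ i) * X (DVar.xP j k hjk) ∨
          g = X (DVar.xJ j) * X (DVar.xP i k (hij.trans hjk))
              - X (DVar.xP i j hij) * X (DVar.xP j k hjk) ∨
          g = X (DVar.xJ k) * X (DVar.xP i j hij)
              - X (DVar.xP i k (hij.trans hjk)) * X (DVar.xP j k hjk) ∨
          g = X (DVar.xP j k hjk) * X (DVar.y i)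
              - X (DVar.xP i j hij) * X (DVar.y k) ∨
          g = X (DVar.xP i k (hij.trans hjk)) * X (DVar.y j)
              - X (DVar.xP i j hij) * X (DVar.y k)) ∨
      (∃ (i j : Fin (m - 1)) (hij : i < j),
          g = X (DVar.xJ i) * X (DVar.xJ j) - X (DVar.xP i j hij) ^ 2 ∨
          g = X (DVar.xJ j) * X (DVar.y i) - X (DVar.xP i j hij) * X (DVar.y j) ∨
          g = X (DVar.xP i j hij) * X (DVar.y i) - X (DVar.xJ i) * X (DVar.y j) ∨
          g = X (DVar.xP i j hij) * X DVar.x1 * X DVar.xn - X (DVar.y i) * X (DVar.y j)) ∨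
      (∃ i : Fin (m - 1),
          g = X (DVar.xJ i) * X DVar.x1 * X DVar.xn - X (DVar.y i) ^ 2)}

/-- The set `in(𝒢_{D_{2m}})` of the first-written monomials of the binomials of `𝒢_{D_{2m}}`. -/
noncomputable def inGD (K : Type*) [Field K] (m : ℕ) : Set (MvPolynomial (DVar m) K) :=
  {g | (∃ (i j k l : Fin (m - 1)) (hij : i < j) (hjk : j < k) (hkl : k < l),
          g = X (DVar.xP i k (hij.trans hjk)) * X (DVar.xP j l (hjk.trans hkl)) ∨
          g = X (DVar.xP i l (hij.trans (hjk.trans hkl))) * X (DVar.xP j k hjk)) ∨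
      (∃ (i j k : Fin (m - 1)) (hij : i < j) (hjk : j < k),
          g = X (DVar.xP i j hij) * X (DVar.xP i k (hij.trans hjk)) ∨
          g = X (DVar.xJ j) * X (DVar.xP i k (hij.trans hjk)) ∨
          g = X (DVar.xJ k) * X (DVar.xP i j hij) ∨
          g = X (DVar.xP j k hjk) * X (DVar.y i) ∨
          g = X (DVar.xP i k (hij.trans hjk)) * X (DVar.y j)) ∨
      (∃ (i j : Fin (m - 1)) (hij : i < j),
          g = X (DVar.xJ i) * X (DVar.xJ j) ∨
          g = X (DVar.xJ j) * X (DVar.y i) ∨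
          g = X (DVar.xP i j hij) * X (DVar.y i) ∨
          g = X (DVar.xP i j hij) * X DVar.x1 * X DVar.xn) ∨
      (∃ i : Fin (m - 1),
          g = X (DVar.xJ i) * X DVar.x1 * X DVar.xn)}


namespace DComb

variable {N : ℕ}

/-- total pair-degree at `t` -/
def Pf (Q : Fin N → Fin N → ℕ) (t : Fin N) : ℕ := ∑ s, (Q s t + Q t s)

lemma term_le_Pf (Q : Fin N → Fin N → ℕ) (s t : Fin N) : Q s t + Q t s ≤ Pf Q t := by
  unfold Pf
  exact Finset.single_le_sum (f := fun s => Q s t + Q t s)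
    (fun i _ => Nat.zero_le _) (Finset.mem_univ s)

lemma Qst_le_Pf_t (Q : Fin N → Fin N → ℕ) (s t : Fin N) : Q s t ≤ Pf Q t :=
  le_trans (Nat.le_add_right _ _) (term_le_Pf Q s t)

lemma Qst_le_Pf_s (Q : Fin N → Fin N → ℕ) (s t : Fin N) : Q s t ≤ Pf Q s := by
  have := term_le_Pf Q t s; omega

/-- constraints on the pair/diagonal part of a standard monomial -/
structure OKp (A : Fin N → ℕ) (Q : Fin N → Fin N → ℕ) : Prop where
  qz : ∀ s t, ¬ s < t → Q s t = 0
  single : ∀ s t, s ≠ t → 0 < A s → 0 < A t → False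
  k2 : ∀ t0 s t, 0 < A t0 → 0 < Q s t → t0 ≤ s ∨ t = t0
  k3 : ∀ s t t', 0 < Q s t → 0 < Q s t' → t = t'
  k4 : ∀ s t u v, s < u → 0 < Q s t → 0 < Q u v → t ≤ u ∨ t = v

section inner

variable {A : Fin N → ℕ} {Q : Fin N → Fin N → ℕ} {H : Fin N → ℕ} {T : Fin N}

lemma Qpos_lt (hok : OKp A Q) {s t : Fin N} (hq : 0 < Q s t) : s < t := by
  by_contra h; rw [hok.qz s t h] at hq; omega

lemma QT0 (hok : OKp A Q) (hH : ∀ t, 2 * A t + Pf Q t = H t)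
    (hmax : ∀ t, 0 < H t → t ≤ T) : ∀ t, Q T t = 0 := by
  intro t
  by_contra h
  have hpos : 0 < Q T t := Nat.pos_of_ne_zero h
  have h1 : T < t := Qpos_lt hok hpos
  have h2 : 0 < H t := by have := Qst_le_Pf_t Q T t; have := hH t; omega
  exact absurd (hmax t h2) (not_le.2 h1)

lemma PfT_eq (hok : OKp A Q) (hH : ∀ t, 2 * A t + Pf Q t = H t)
    (hmax : ∀ t, 0 < H t → t ≤ T) :
    Pf Q T = ∑ u ∈ Finset.univ.erase T, Q u T := by
  have h0 := QT0 hok hH hmax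
  have : Pf Q T = ∑ u : Fin N, Q u T := by
    unfold Pf; exact Finset.sum_congr rfl (fun u _ => by rw [h0 u]; omega)
  rw [this, ← Finset.add_sum_erase _ _ (Finset.mem_univ T), h0 T, zero_add]

lemma QuT_le_H (hH : ∀ t, 2 * A t + Pf Q t = H t) (u : Fin N) : Q u T ≤ H u := by
  have := Qst_le_Pf_s Q u T; have := hH u; omega

lemma noA_le (hok : OKp A Q) (hH : ∀ t, 2 * A t + Pf Q t = H t)
    (hmax : ∀ t, 0 < H t → t ≤ T) (hA : A T = 0) :
    H T ≤ ∑ u ∈ Finset.univ.erase T, H u := by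
  have h1 : H T = ∑ u ∈ Finset.univ.erase T, Q u T := by
    rw [← hH T, hA, PfT_eq hok hH hmax]; ring
  rw [h1]
  exact Finset.sum_le_sum (fun u _ => QuT_le_H hH u)

lemma X_maxT (hok : OKp A Q) (hH : ∀ t, 2 * A t + Pf Q t = H t)
    (hmax : ∀ t, 0 < H t → t ≤ T) (hA : 0 < A T) :
    ∀ s t, 0 < Q s t → t = T := by
  intro s t hq
  rcases hok.k2 T s t hA hq with h | h
  · exfalso
    have h1 : s < t := Qpos_lt hok hq
    have h2 : 0 < H t := by have := Qst_le_Pf_t Q s t; have := hH t; omega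
    have := hmax t h2
    have : t ≤ T := this
    exact absurd (lt_of_le_of_lt h h1) (not_lt.2 this)
  · exact h

lemma X_hx (hok : OKp A Q) (hH : ∀ t, 2 * A t + Pf Q t = H t)
    (hmax : ∀ t, 0 < H t → t ≤ T) (hA : 0 < A T) :
    ∀ x, x ≠ T → H x = Q x T := by
  intro x hx
  have hAx : A x = 0 := by
    by_contra h
    exact hok.single x T hx (Nat.pos_of_ne_zero h) hA
  have hux : ∀ u, Q u x = 0 := by
    intro u; by_contra h
    exact hx (X_maxT hok hH hmax hA u x (Nat.pos_of_ne_zero h))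
  have hxu : ∑ u : Fin N, Q x u = Q x T := by
    apply Finset.sum_eq_single
    · intro u _ hu
      by_contra h
      exact hu (X_maxT hok hH hmax hA x u (Nat.pos_of_ne_zero h))
    · intro h; exact absurd (Finset.mem_univ T) h
  have : Pf Q x = Q x T := by
    unfold Pf
    rw [show (∑ s : Fin N, (Q s x + Q x s)) = ∑ s : Fin N, Q x s from
      Finset.sum_congr rfl (fun u _ => by rw [hux u]; omega), hxu]
  rw [← hH x, hAx, this]; ring

lemma X_hT (hok : OKp A Q) (hH : ∀ t, 2 * A t + Pf Q t = H t)
    (hmax : ∀ t, 0 < H t → t ≤ T) (hA : 0 < A T) :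
    H T = 2 * A T + ∑ u ∈ Finset.univ.erase T, H u := by
  rw [← hH T, PfT_eq hok hH hmax]
  congr 1
  exact Finset.sum_congr rfl (fun u hu =>
    ((X_hx hok hH hmax hA u (Finset.ne_of_mem_erase hu)).symm))

lemma nX_hT (hok : OKp A Q) (hH : ∀ t, 2 * A t + Pf Q t = H t)
    (hmax : ∀ t, 0 < H t → t ≤ T) (hA : A T = 0) :
    H T = ∑ u ∈ Finset.univ.erase T, Q u T := by
  rw [← hH T, hA, PfT_eq hok hH hmax]; ring

lemma Y5 (hok : OKp A Q) (hH : ∀ t, 2 * A t + Pf Q t = H t)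
    (hmax : ∀ t, 0 < H t → t ≤ T) {θ : Fin N} (hθpos : 0 < Q θ T) :
    ∀ s, θ < s → s ≠ T → H s = Q s T := by
  intro s hθs hsT
  have hAs : A s = 0 := by
    by_contra h
    rcases hok.k2 s θ T (Nat.pos_of_ne_zero h) hθpos with h1 | h1
    · exact absurd h1 (not_le.2 hθs)
    · exact hsT h1.symm
  have hus : ∀ u, Q u s = 0 := by
    intro u; by_contra h
    have hpos : 0 < Q u s := Nat.pos_of_ne_zero h
    have hus' : u < s := Qpos_lt hok hpos
    rcases lt_trichotomy u θ with h1 | h1 | h1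
    · rcases hok.k4 u s θ T h1 hpos hθpos with h2 | h2
      · exact absurd h2 (not_le.2 hθs)
      · exact hsT h2
    · subst h1
      exact hsT (hok.k3 u s T hpos hθpos)
    · rcases hok.k4 θ T u s h1 hθpos hpos with h2 | h2
      · -- T ≤ u < s, so 0 < H s gives s ≤ T, contradiction
        have h3 : 0 < H s := by have := Qst_le_Pf_t Q u s; have := hH s; omega
        have := hmax s h3
        omega
      · exact hsT h2.symm
  have hsu : ∑ u : Fin N, Q s u = Q s T := by
    apply Finset.sum_eq_single
    · intro u _ huT
      by_contra h
      have hpos : 0 < Q s u := Nat.pos_of_ne_zero h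
      rcases hok.k4 θ T s u hθs hθpos hpos with h2 | h2
      · have h3 : 0 < H s := by have := Qst_le_Pf_s Q s u; have := hH s; omega
        have h4 := hmax s h3
        have : s = T := le_antisymm h4 h2
        exact hsT this
      · exact huT h2.symm
    · intro h; exact absurd (Finset.mem_univ T) h
  have hPf : Pf Q s = Q s T := by
    unfold Pf
    rw [show (∑ u : Fin N, (Q u s + Q s u)) = ∑ u : Fin N, Q s u from
      Finset.sum_congr rfl (fun u _ => by rw [hus u]; omega), hsu]
  rw [← hH s, hAs, hPf]; ring

lemma Y6 (hok : OKp A Q) (hH : ∀ t, 2 * A t + Pf Q t = H t)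
    (hmax : ∀ t, 0 < H t → t ≤ T) (hA : A T = 0) {θ : Fin N} (hθpos : 0 < Q θ T)
    (hθmin : ∀ u, 0 < Q u T → θ ≤ u) :
    H T = Q θ T + ∑ s ∈ Finset.Ioo θ T, H s := by
  have hθT : θ < T := Qpos_lt hok hθpos
  have h1 := nX_hT hok hH hmax hA
  have hsub : insert θ (Finset.Ioo θ T) ⊆ Finset.univ.erase T := by
    intro u hu
    rcases Finset.mem_insert.1 hu with h | h
    · subst h; exact Finset.mem_erase.2 ⟨ne_of_lt hθT, Finset.mem_univ _⟩
    · exact Finset.mem_erase.2 ⟨ne_of_lt (Finset.mem_Ioo.1 h).2, Finset.mem_univ _⟩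
  have hvanish : ∀ u ∈ Finset.univ.erase T, u ∉ insert θ (Finset.Ioo θ T) → Q u T = 0 := by
    intro u hu hni
    by_contra h
    have hpos : 0 < Q u T := Nat.pos_of_ne_zero h
    have h2 := hθmin u hpos
    have h3 : u < T := Qpos_lt hok hpos
    have h4 : u ≠ θ := fun he => hni (Finset.mem_insert.2 (Or.inl he))
    exact hni (Finset.mem_insert.2 (Or.inr (Finset.mem_Ioo.2 ⟨lt_of_le_of_ne h2 (Ne.symm h4), h3⟩)))
  have h5 : ∑ u ∈ insert θ (Finset.Ioo θ T), Q u T = ∑ u ∈ Finset.univ.erase T, Q u T :=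
    Finset.sum_subset hsub hvanish
  have h6 : ∑ u ∈ insert θ (Finset.Ioo θ T), Q u T
      = Q θ T + ∑ u ∈ Finset.Ioo θ T, Q u T := by
    rw [Finset.sum_insert (by simp)]
  have h7 : ∑ u ∈ Finset.Ioo θ T, Q u T = ∑ u ∈ Finset.Ioo θ T, H u := by
    apply Finset.sum_congr rfl
    intro u hu
    rcases Finset.mem_Ioo.1 hu with ⟨h8, h9⟩
    exact (Y5 hok hH hmax hθpos u h8 (ne_of_lt h9)).symm
  omega

end inner

lemma OKp_resid {A : Fin N → ℕ} {Q : Fin N → Fin N → ℕ} (hok : OKp A Q) (T : Fin N) :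
    OKp A (fun u v => if v = T then 0 else Q u v) := by
  have key : ∀ s t : Fin N, 0 < (if t = T then 0 else Q s t) → 0 < Q s t := by
    intro s t h
    by_cases ht : t = T
    · simp [ht] at h
    · simpa [ht] using h
  constructor
  · intro s t hst
    by_cases ht : t = T
    · simp [ht]
    · simp [ht, hok.qz s t hst]
  · exact hok.single
  · intro t0 s t h1 h2; exact hok.k2 t0 s t h1 (key s t h2)
  · intro s t t' h1 h2; exact hok.k3 s t t' (key s t h1) (key s t' h2)
  · intro s t u v h h1 h2; exact hok.k4 s t u v h (key s t h1) (key u v h2)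

lemma Pf_resid {Q : Fin N → Fin N → ℕ} {T : Fin N} (t : Fin N) (ht : t ≠ T) :
    Pf (fun u v => if v = T then 0 else Q u v) t + Q t T = Pf Q t := by
  unfold Pf
  simp only [if_neg ht]
  rw [Finset.sum_add_distrib, Finset.sum_add_distrib]
  have hg : (∑ u : Fin N, if u = T then (0:ℕ) else Q t u) + Q t T
      = ∑ u : Fin N, Q t u := by
    have h1 : ∀ u : Fin N,
        (if u = T then (0:ℕ) else Q t u) + (if u = T then Q t T else 0) = Q t u := by
      intro u; by_cases hu : u = T <;> simp [hu]
    calc (∑ u : Fin N, if u = T then (0:ℕ) else Q t u) + Q t T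
        = ∑ u : Fin N, ((if u = T then (0:ℕ) else Q t u) + (if u = T then Q t T else 0)) := by
          rw [Finset.sum_add_distrib, Finset.sum_ite_eq' Finset.univ T (fun _ => Q t T)]
          simp
      _ = ∑ u : Fin N, Q t u := Finset.sum_congr rfl (fun u _ => h1 u)
  omega

lemma Pf_resid_T {Q : Fin N → Fin N → ℕ} {T : Fin N} (hQT0 : ∀ u, Q T u = 0) :
    Pf (fun u v => if v = T then 0 else Q u v) T = 0 := by
  unfold Pf
  apply Finset.sum_eq_zero
  intro u _
  by_cases hu : u = T <;> simp [hu, hQT0]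

lemma step3 : ∀ (n : ℕ) (A A' : Fin N → ℕ) (Q Q' : Fin N → Fin N → ℕ),
    OKp A Q → OKp A' Q' →
    (∀ t, 2 * A t + Pf Q t = 2 * A' t + Pf Q' t) →
    (∑ t, (2 * A t + Pf Q t)) ≤ n →
    A = A' ∧ Q = Q' := by
  intro n
  induction n with
  | zero =>
    intro A A' Q Q' hok hok' heq hsum
    have hz : ∀ t, 2 * A t + Pf Q t = 0 := by
      intro t
      have hle : 2 * A t + Pf Q t ≤ ∑ x, (2 * A x + Pf Q x) :=
        Finset.single_le_sum (f := fun x => 2 * A x + Pf Q x)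
          (fun i _ => Nat.zero_le _) (Finset.mem_univ t)
      omega
    constructor
    · funext t; have h1 := hz t; have h2 := heq t; omega
    · funext s t
      have h1 := hz t; have h2 := heq t
      have h3 := Qst_le_Pf_t Q s t; have h4 := Qst_le_Pf_t Q' s t
      omega
  | succ n ih =>
    intro A A' Q Q' hok hok' heq hsum
    by_cases hz : ∀ t, 2 * A t + Pf Q t = 0
    · constructor
      · funext t; have h1 := hz t; have h2 := heq t; omega
      · funext s t
        have h1 := hz t; have h2 := heq t
        have h3 := Qst_le_Pf_t Q s t; have h4 := Qst_le_Pf_t Q' s t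
        omega
    · push_neg at hz
      obtain ⟨t₀, ht₀⟩ := hz
      set H : Fin N → ℕ := fun t => 2 * A t + Pf Q t with hHdef
      have hH : ∀ t, 2 * A t + Pf Q t = H t := fun t => rfl
      have hH' : ∀ t, 2 * A' t + Pf Q' t = H t := fun t => (heq t).symm
      have hTex : ∃ T, 0 < H T ∧ ∀ t, 0 < H t → t ≤ T := by
        classical
        set Tset : Finset (Fin N) := Finset.univ.filter (fun t => 0 < H t) with hTset
        have hne : Tset.Nonempty := ⟨t₀, by
          simp only [hTset, Finset.mem_filter, Finset.mem_univ, true_and]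
          rw [← hH t₀]; omega⟩
        refine ⟨Tset.max' hne, ?_, ?_⟩
        · have := Tset.max'_mem hne
          simp only [hTset, Finset.mem_filter, Finset.mem_univ, true_and] at this
          exact this
        · intro t ht
          exact Tset.le_max' t
            (by simp only [hTset, Finset.mem_filter, Finset.mem_univ, true_and]; exact ht)
      obtain ⟨T, hTpos, hmax⟩ := hTex
      by_cases hA : 0 < A T
      · -- branch X
        have hA' : 0 < A' T := by
          by_contra h
          have hA'0 : A' T = 0 := by omega
          have h1 := noA_le hok' hH' hmax hA'0
          have h2 := X_hT hok hH hmax hA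
          omega
        constructor
        · funext x
          by_cases hx : x = T
          · rw [hx]
            have h1 := X_hT hok hH hmax hA
            have h2 := X_hT hok' hH' hmax hA'
            omega
          · have h1 : A x = 0 := by
              by_contra h; exact hok.single x T hx (Nat.pos_of_ne_zero h) hA
            have h2 : A' x = 0 := by
              by_contra h; exact hok'.single x T hx (Nat.pos_of_ne_zero h) hA'
            rw [h1, h2]
        · funext u v
          by_cases hv : v = T
          · rw [hv]
            by_cases hu : u = T
            · rw [hu, hok.qz T T (lt_irrefl T), hok'.qz T T (lt_irrefl T)]
            · have h1 := X_hx hok hH hmax hA u hu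
              have h2 := X_hx hok' hH' hmax hA' u hu
              omega
          · have h1 : Q u v = 0 := by
              by_contra h
              exact hv (X_maxT hok hH hmax hA u v (Nat.pos_of_ne_zero h))
            have h2 : Q' u v = 0 := by
              by_contra h
              exact hv (X_maxT hok' hH' hmax hA' u v (Nat.pos_of_ne_zero h))
            rw [h1, h2]
      · -- branch ¬X
        have hA0 : A T = 0 := by omega
        have hA0' : A' T = 0 := by
          by_contra h
          have h1 := X_hT hok' hH' hmax (Nat.pos_of_ne_zero h)
          have h2 := noA_le hok hH hmax hA0
          omega
        -- existence of a pair with max T, on both sides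
        have hex : ∃ u, 0 < Q u T := by
          by_contra h
          push_neg at h
          have h1 := nX_hT hok hH hmax hA0
          have h2 : ∑ u ∈ Finset.univ.erase T, Q u T = 0 :=
            Finset.sum_eq_zero (fun u _ => by have := h u; omega)
          omega
        have hex' : ∃ u, 0 < Q' u T := by
          by_contra h
          push_neg at h
          have h1 := nX_hT hok' hH' hmax hA0'
          have h2 : ∑ u ∈ Finset.univ.erase T, Q' u T = 0 :=
            Finset.sum_eq_zero (fun u _ => by have := h u; omega)
          omega
        have hθex : ∃ θ, 0 < Q θ T ∧ ∀ u, 0 < Q u T → θ ≤ u := by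
          classical
          set θset : Finset (Fin N) := Finset.univ.filter (fun u => 0 < Q u T) with hθset
          obtain ⟨u₀, hu₀⟩ := hex
          have hθne : θset.Nonempty := ⟨u₀, by
            simp only [hθset, Finset.mem_filter, Finset.mem_univ, true_and]; exact hu₀⟩
          refine ⟨θset.min' hθne, ?_, ?_⟩
          · have := θset.min'_mem hθne
            simp only [hθset, Finset.mem_filter, Finset.mem_univ, true_and] at this
            exact this
          · intro u hu
            exact θset.min'_le u
              (by simp only [hθset, Finset.mem_filter, Finset.mem_univ, true_and]; exact hu)
        obtain ⟨θ, hθpos, hθmin⟩ := hθex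
        have hθex' : ∃ θ, 0 < Q' θ T ∧ ∀ u, 0 < Q' u T → θ ≤ u := by
          classical
          set θset : Finset (Fin N) := Finset.univ.filter (fun u => 0 < Q' u T) with hθset
          obtain ⟨u₀, hu₀⟩ := hex'
          have hθne : θset.Nonempty := ⟨u₀, by
            simp only [hθset, Finset.mem_filter, Finset.mem_univ, true_and]; exact hu₀⟩
          refine ⟨θset.min' hθne, ?_, ?_⟩
          · have := θset.min'_mem hθne
            simp only [hθset, Finset.mem_filter, Finset.mem_univ, true_and] at this
            exact this
          · intro u hu
            exact θset.min'_le u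
              (by simp only [hθset, Finset.mem_filter, Finset.mem_univ, true_and]; exact hu)
        obtain ⟨θ', hθpos', hθmin'⟩ := hθex'
        have hθT : θ < T := Qpos_lt hok hθpos
        have hθT' : θ' < T := Qpos_lt hok' hθpos'
        set Fio : Fin N → ℕ := fun x => ∑ s ∈ Finset.Ioo x T, H s with hFio
        have hY6 : H T = Q θ T + Fio θ := Y6 hok hH hmax hA0 hθpos hθmin
        have hY6' : H T = Q' θ' T + Fio θ' := Y6 hok' hH' hmax hA0' hθpos' hθmin'
        have hQθle : Q θ T ≤ H θ := QuT_le_H hH θ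
        have hQθle' : Q' θ' T ≤ H θ' := QuT_le_H hH' θ'
        -- uniqueness of θ
        have key : ∀ x x' : Fin N, x < x' → x' < T → Fio x < H T → H T ≤ Fio x' + H x' → False := by
          intro x x' hxx' hx'T h1 h2
          have hsub : insert x' (Finset.Ioo x' T) ⊆ Finset.Ioo x T := by
            intro u hu
            rcases Finset.mem_insert.1 hu with h | h
            · subst h; exact Finset.mem_Ioo.2 ⟨hxx', hx'T⟩
            · rcases Finset.mem_Ioo.1 h with ⟨h3, h4⟩
              exact Finset.mem_Ioo.2 ⟨lt_trans hxx' h3, h4⟩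
          have h3 : ∑ u ∈ insert x' (Finset.Ioo x' T), H u ≤ Fio x :=
            Finset.sum_le_sum_of_subset hsub
          rw [Finset.sum_insert (by simp)] at h3
          simp only [hFio] at h3 h2 h1
          omega
        have hθeq : θ = θ' := by
          rcases lt_trichotomy θ θ' with h | h | h
          · exact (key θ θ' h hθT' (by omega) (by omega)).elim
          · exact h
          · exact (key θ' θ h hθT (by omega) (by omega)).elim
        -- Q and Q' agree on column T
        have hQT : ∀ u, Q u T = Q' u T := by
          intro u
          rcases lt_trichotomy u θ with h | h | h
          · have h1 : Q u T = 0 := by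
              by_contra hc; have := hθmin u (Nat.pos_of_ne_zero hc); omega
            have h2 : Q' u T = 0 := by
              by_contra hc; have := hθmin' u (Nat.pos_of_ne_zero hc)
              rw [← hθeq] at this; omega
            rw [h1, h2]
          · subst h
            rw [← hθeq] at hY6'
            omega
          · by_cases huT : u < T
            · have h1 := Y5 hok hH hmax hθpos u h (ne_of_lt huT)
              have h2 := Y5 hok' hH' hmax hθpos' u (hθeq ▸ h) (ne_of_lt huT)
              omega
            · rw [hok.qz u T huT, hok'.qz u T huT]
        -- residual configurations
        set Q₁ : Fin N → Fin N → ℕ := fun u v => if v = T then 0 else Q u v with hQ₁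
        set Q₁' : Fin N → Fin N → ℕ := fun u v => if v = T then 0 else Q' u v with hQ₁'
        have hok₁ := OKp_resid hok T
        have hok₁' := OKp_resid hok' T
        have hQT0 := QT0 hok hH hmax
        have hQT0' := QT0 hok' hH' hmax
        have heq₁ : ∀ t, 2 * A t + Pf Q₁ t = 2 * A' t + Pf Q₁' t := by
          intro t
          by_cases ht : t = T
          · have h1 : Pf Q₁ T = 0 := Pf_resid_T hQT0
            have h2 : Pf Q₁' T = 0 := Pf_resid_T hQT0'
            rw [ht]; omega
          · have h1 : Pf Q₁ t + Q t T = Pf Q t := Pf_resid t ht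
            have h2 : Pf Q₁' t + Q' t T = Pf Q' t := Pf_resid t ht
            have h3 := heq t
            have h4 := hQT t
            omega
        have hlt : ∀ t, Pf Q₁ t ≤ Pf Q t := by
          intro t
          apply Finset.sum_le_sum
          intro u _
          have : ∀ a b : Fin N, Q₁ a b ≤ Q a b := by
            intro a b; simp only [hQ₁]; split <;> omega
          have h1 := this u t; have h2 := this t u
          omega
        have hsum₁ : (∑ t, (2 * A t + Pf Q₁ t)) ≤ n := by
          have hstrict : ∑ t, (2 * A t + Pf Q₁ t) < ∑ t, (2 * A t + Pf Q t) := by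
            apply Finset.sum_lt_sum
            · intro t _; have := hlt t; omega
            · refine ⟨T, Finset.mem_univ T, ?_⟩
              have h1 : Pf Q₁ T = 0 := Pf_resid_T hQT0
              have h2 : 0 < 2 * A T + Pf Q T := hTpos
              omega
          have hb : Finset.univ.sum H = ∑ t, (2 * A t + Pf Q t) := rfl
          omega
        obtain ⟨hAeq, hQeq⟩ := ih A A' Q₁ Q₁' hok₁ hok₁' heq₁ hsum₁
        refine ⟨hAeq, ?_⟩
        funext u v
        by_cases hv : v = T
        · rw [hv]; exact hQT u
        · have := congrFun (congrFun hQeq u) v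
          simpa [hQ₁, hQ₁', hv] using this


lemma step2 (A G : Fin N → ℕ) (Q : Fin N → Fin N → ℕ)
    (hQz : ∀ s t, ¬ s < t → Q s t = 0)
    (K1 : ∀ i s t, 0 < G i → 0 < Q s t → t ≤ i)
    (K1b : ∀ i j, 0 < G i → 0 < A j → j ≤ i)
    (S : Finset (Fin N)) (hS : ∀ ⦃s s'⦄, s ∈ S → s ≤ s' → s' ∈ S) :
    ∑ s ∈ S, G s = min (∑ t, G t) (∑ s ∈ S, (2 * A s + Pf Q s + G s)) := by
  by_cases hcase : ∀ i, i ∉ S → G i = 0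
  · have h1 : ∑ s ∈ S, G s = ∑ t, G t :=
      Finset.sum_subset (Finset.subset_univ S) (fun x _ hx => hcase x hx)
    have h2 : ∑ s ∈ S, G s ≤ ∑ s ∈ S, (2 * A s + Pf Q s + G s) :=
      Finset.sum_le_sum (fun s _ => by omega)
    rw [h1] at h2 ⊢
    rw [min_eq_left h2]
  · push_neg at hcase
    obtain ⟨i, hiS, hGi⟩ := hcase
    have hGi : 0 < G i := Nat.pos_of_ne_zero hGi
    have hlt : ∀ s ∈ S, i < s := by
      intro s hs
      by_contra h
      exact hiS (hS hs (not_lt.1 h))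
    have hcs : ∀ s ∈ S, 2 * A s + Pf Q s + G s = G s := by
      intro s hs
      have hAs : A s = 0 := by
        by_contra h
        have := K1b i s hGi (Nat.pos_of_ne_zero h)
        have := hlt s hs
        omega
      have hPf : Pf Q s = 0 := by
        apply Finset.sum_eq_zero
        intro u _
        have h1 : Q u s = 0 := by
          by_contra h
          have := K1 i u s hGi (Nat.pos_of_ne_zero h)
          have := hlt s hs
          omega
        have h2 : Q s u = 0 := by
          by_contra h
          have hq : 0 < Q s u := Nat.pos_of_ne_zero h
          have h3 := K1 i s u hGi hq
          have h4 : s < u := by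
            by_contra h5; rw [hQz s u h5] at hq; omega
          have := hlt s hs
          omega
        omega
      omega
    have h1 : ∑ s ∈ S, (2 * A s + Pf Q s + G s) = ∑ s ∈ S, G s :=
      Finset.sum_congr rfl hcs
    have h2 : ∑ s ∈ S, G s ≤ ∑ t, G t :=
      Finset.sum_le_sum_of_subset (Finset.subset_univ S)
    rw [h1, min_eq_right h2]

theorem comb {N : ℕ} (α β α' β' : ℕ) (A G A' G' : Fin N → ℕ) (Q Q' : Fin N → Fin N → ℕ)
    (hQz : ∀ s t, ¬ s < t → Q s t = 0) (hQz' : ∀ s t, ¬ s < t → Q' s t = 0)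
    (C1a : ∀ i j k l : Fin N, i < j → j < k → k < l → ¬(0 < Q i k ∧ 0 < Q j l))
    (C1b : ∀ i j k l : Fin N, i < j → j < k → k < l → ¬(0 < Q i l ∧ 0 < Q j k))
    (C2a : ∀ i j k : Fin N, i < j → j < k → ¬(0 < Q i j ∧ 0 < Q i k))
    (C2b : ∀ i j k : Fin N, i < j → j < k → ¬(0 < A j ∧ 0 < Q i k))
    (C2c : ∀ i j k : Fin N, i < j → j < k → ¬(0 < A k ∧ 0 < Q i j))
    (C2d : ∀ i j k : Fin N, i < j → j < k → ¬(0 < Q j k ∧ 0 < G i))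
    (C2e : ∀ i j k : Fin N, i < j → j < k → ¬(0 < Q i k ∧ 0 < G j))
    (C3a : ∀ i j : Fin N, i < j → ¬(0 < A i ∧ 0 < A j))
    (C3b : ∀ i j : Fin N, i < j → ¬(0 < A j ∧ 0 < G i))
    (C3c : ∀ i j : Fin N, i < j → ¬(0 < Q i j ∧ 0 < G i))
    (C3d : ∀ i j : Fin N, i < j → ¬(0 < Q i j ∧ 0 < α ∧ 0 < β))
    (C4 : ∀ i : Fin N, ¬(0 < A i ∧ 0 < α ∧ 0 < β))
    (C1a' : ∀ i j k l : Fin N, i < j → j < k → k < l → ¬(0 < Q' i k ∧ 0 < Q' j l))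
    (C1b' : ∀ i j k l : Fin N, i < j → j < k → k < l → ¬(0 < Q' i l ∧ 0 < Q' j k))
    (C2a' : ∀ i j k : Fin N, i < j → j < k → ¬(0 < Q' i j ∧ 0 < Q' i k))
    (C2b' : ∀ i j k : Fin N, i < j → j < k → ¬(0 < A' j ∧ 0 < Q' i k))
    (C2c' : ∀ i j k : Fin N, i < j → j < k → ¬(0 < A' k ∧ 0 < Q' i j))
    (C2d' : ∀ i j k : Fin N, i < j → j < k → ¬(0 < Q' j k ∧ 0 < G' i))
    (C2e' : ∀ i j k : Fin N, i < j → j < k → ¬(0 < Q' i k ∧ 0 < G' j))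
    (C3a' : ∀ i j : Fin N, i < j → ¬(0 < A' i ∧ 0 < A' j))
    (C3b' : ∀ i j : Fin N, i < j → ¬(0 < A' j ∧ 0 < G' i))
    (C3c' : ∀ i j : Fin N, i < j → ¬(0 < Q' i j ∧ 0 < G' i))
    (C3d' : ∀ i j : Fin N, i < j → ¬(0 < Q' i j ∧ 0 < α' ∧ 0 < β'))
    (C4' : ∀ i : Fin N, ¬(0 < A' i ∧ 0 < α' ∧ 0 < β'))
    (he1 : 2 * α + ∑ t, G t = 2 * α' + ∑ t, G' t)
    (hen : 2 * β + ∑ t, G t = 2 * β' + ∑ t, G' t)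
    (hc : ∀ t, 2 * A t + Pf Q t + G t = 2 * A' t + Pf Q' t + G' t) :
    α = α' ∧ β = β' ∧ A = A' ∧ G = G' ∧ Q = Q' := by
  -- derived constraints
  have hQpos : ∀ s t, 0 < Q s t → s < t := by
    intro s t h; by_contra hc'; rw [hQz s t hc'] at h; omega
  have hQpos' : ∀ s t, 0 < Q' s t → s < t := by
    intro s t h; by_contra hc'; rw [hQz' s t hc'] at h; omega
  have K1 : ∀ i s t, 0 < G i → 0 < Q s t → t ≤ i := by
    intro i s t hg hq
    by_contra h
    push_neg at h
    have hst : s < t := hQpos s t hq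
    rcases lt_trichotomy s i with h1 | h1 | h1
    · exact C2e s i t h1 h ⟨hq, hg⟩
    · rw [h1] at hq; exact C3c i t h ⟨hq, hg⟩
    · exact C2d i s t h1 hst ⟨hq, hg⟩
  have K1' : ∀ i s t, 0 < G' i → 0 < Q' s t → t ≤ i := by
    intro i s t hg hq
    by_contra h
    push_neg at h
    have hst : s < t := hQpos' s t hq
    rcases lt_trichotomy s i with h1 | h1 | h1
    · exact C2e' s i t h1 h ⟨hq, hg⟩
    · rw [h1] at hq; exact C3c' i t h ⟨hq, hg⟩
    · exact C2d' i s t h1 hst ⟨hq, hg⟩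
  have K1b : ∀ i j, 0 < G i → 0 < A j → j ≤ i := by
    intro i j hg ha
    by_contra h
    push_neg at h
    exact C3b i j h ⟨ha, hg⟩
  have K1b' : ∀ i j, 0 < G' i → 0 < A' j → j ≤ i := by
    intro i j hg ha
    by_contra h
    push_neg at h
    exact C3b' i j h ⟨ha, hg⟩
  have hok : OKp A Q := by
    constructor
    · exact hQz
    · intro s t hst h1 h2
      rcases lt_trichotomy s t with h | h | h
      · exact C3a s t h ⟨h1, h2⟩
      · exact hst h
      · exact C3a t s h ⟨h2, h1⟩
    · intro t0 s t hA hq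
      by_contra hcon
      push_neg at hcon
      obtain ⟨h1, h2⟩ := hcon
      have hst : s < t := hQpos s t hq
      rcases lt_trichotomy t t0 with h3 | h3 | h3
      · exact C2c s t t0 hst h3 ⟨hA, hq⟩
      · exact h2 h3
      · exact C2b s t0 t h1 h3 ⟨hA, hq⟩
    · intro s t t' h1 h2
      by_contra hne
      have hst : s < t := hQpos s t h1
      have hst' : s < t' := hQpos s t' h2
      rcases lt_trichotomy t t' with h | h | h
      · exact C2a s t t' hst h ⟨h1, h2⟩
      · exact hne h
      · exact C2a s t' t hst' h ⟨h2, h1⟩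
    · intro s t u v hsu h1 h2
      by_contra hcon
      push_neg at hcon
      obtain ⟨h3, h4⟩ := hcon
      have hst : s < t := hQpos s t h1
      have huv : u < v := hQpos u v h2
      rcases lt_trichotomy t v with h | h | h
      · exact C1a s u t v hsu h3 h ⟨h1, h2⟩
      · exact h4 h
      · exact C1b s u v t hsu huv h ⟨h1, h2⟩
  have hok' : OKp A' Q' := by
    constructor
    · exact hQz'
    · intro s t hst h1 h2
      rcases lt_trichotomy s t with h | h | h
      · exact C3a' s t h ⟨h1, h2⟩
      · exact hst h
      · exact C3a' t s h ⟨h2, h1⟩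
    · intro t0 s t hA hq
      by_contra hcon
      push_neg at hcon
      obtain ⟨h1, h2⟩ := hcon
      have hst : s < t := hQpos' s t hq
      rcases lt_trichotomy t t0 with h3 | h3 | h3
      · exact C2c' s t t0 hst h3 ⟨hA, hq⟩
      · exact h2 h3
      · exact C2b' s t0 t h1 h3 ⟨hA, hq⟩
    · intro s t t' h1 h2
      by_contra hne
      have hst : s < t := hQpos' s t h1
      have hst' : s < t' := hQpos' s t' h2
      rcases lt_trichotomy t t' with h | h | h
      · exact C2a' s t t' hst h ⟨h1, h2⟩
      · exact hne h
      · exact C2a' s t' t hst' h ⟨h2, h1⟩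
    · intro s t u v hsu h1 h2
      by_contra hcon
      push_neg at hcon
      obtain ⟨h3, h4⟩ := hcon
      have hst : s < t := hQpos' s t h1
      have huv : u < v := hQpos' u v h2
      rcases lt_trichotomy t v with h | h | h
      · exact C1a' s u t v hsu h3 h ⟨h1, h2⟩
      · exact h4 h
      · exact C1b' s u v t hsu huv h ⟨h1, h2⟩
  -- Step 1 : total y-degree is determined
  have hsplit : ∑ t, (2 * A t + Pf Q t + G t)
      = (∑ t, (2 * A t + Pf Q t)) + ∑ t, G t := by
    rw [← Finset.sum_add_distrib]
  have hsplit' : ∑ t, (2 * A' t + Pf Q' t + G' t)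
      = (∑ t, (2 * A' t + Pf Q' t)) + ∑ t, G' t := by
    rw [← Finset.sum_add_distrib]
  have hSC : ∑ t, (2 * A t + Pf Q t + G t) = ∑ t, (2 * A' t + Pf Q' t + G' t) :=
    Finset.sum_congr rfl (fun t _ => hc t)
  have hdisj : α = 0 ∨ β = 0 ∨ (∑ t, (2 * A t + Pf Q t)) = 0 := by
    by_cases hα : α = 0
    · exact Or.inl hα
    by_cases hβ : β = 0
    · exact Or.inr (Or.inl hβ)
    refine Or.inr (Or.inr (Finset.sum_eq_zero (fun t _ => ?_)))
    have hA : A t = 0 := by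
      by_contra h
      exact C4 t ⟨Nat.pos_of_ne_zero h, Nat.pos_of_ne_zero hα, Nat.pos_of_ne_zero hβ⟩
    have hPf : Pf Q t = 0 := by
      apply Finset.sum_eq_zero
      intro u _
      have h1 : Q u t = 0 := by
        by_contra h
        exact C3d u t (hQpos u t (Nat.pos_of_ne_zero h))
          ⟨Nat.pos_of_ne_zero h, Nat.pos_of_ne_zero hα, Nat.pos_of_ne_zero hβ⟩
      have h2 : Q t u = 0 := by
        by_contra h
        exact C3d t u (hQpos t u (Nat.pos_of_ne_zero h))
          ⟨Nat.pos_of_ne_zero h, Nat.pos_of_ne_zero hα, Nat.pos_of_ne_zero hβ⟩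
      omega
    omega
  have hdisj' : α' = 0 ∨ β' = 0 ∨ (∑ t, (2 * A' t + Pf Q' t)) = 0 := by
    by_cases hα : α' = 0
    · exact Or.inl hα
    by_cases hβ : β' = 0
    · exact Or.inr (Or.inl hβ)
    refine Or.inr (Or.inr (Finset.sum_eq_zero (fun t _ => ?_)))
    have hA : A' t = 0 := by
      by_contra h
      exact C4' t ⟨Nat.pos_of_ne_zero h, Nat.pos_of_ne_zero hα, Nat.pos_of_ne_zero hβ⟩
    have hPf : Pf Q' t = 0 := by
      apply Finset.sum_eq_zero
      intro u _
      have h1 : Q' u t = 0 := by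
        by_contra h
        exact C3d' u t (hQpos' u t (Nat.pos_of_ne_zero h))
          ⟨Nat.pos_of_ne_zero h, Nat.pos_of_ne_zero hα, Nat.pos_of_ne_zero hβ⟩
      have h2 : Q' t u = 0 := by
        by_contra h
        exact C3d' t u (hQpos' t u (Nat.pos_of_ne_zero h))
          ⟨Nat.pos_of_ne_zero h, Nat.pos_of_ne_zero hα, Nat.pos_of_ne_zero hβ⟩
      omega
    omega
  have hYY : ∑ t, G t = ∑ t, G' t := by omega
  -- Step 2 : G is determined
  have hGeq : ∀ t, G t = G' t := by
    intro t
    have hup : ∀ ⦃s s' : Fin N⦄,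
        s ∈ Finset.univ.filter (fun u => t ≤ u) → s ≤ s' →
          s' ∈ Finset.univ.filter (fun u => t ≤ u) := by
      intro s s' hs hss'
      simp only [Finset.mem_filter, Finset.mem_univ, true_and] at hs ⊢
      exact le_trans hs hss'
    have hup2 : ∀ ⦃s s' : Fin N⦄,
        s ∈ Finset.univ.filter (fun u => t < u) → s ≤ s' →
          s' ∈ Finset.univ.filter (fun u => t < u) := by
      intro s s' hs hss'
      simp only [Finset.mem_filter, Finset.mem_univ, true_and] at hs ⊢
      exact lt_of_lt_of_le hs hss'
    have e1 := step2 A G Q hQz K1 K1b _ hup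
    have e1' := step2 A' G' Q' hQz' K1' K1b' _ hup
    have e2 := step2 A G Q hQz K1 K1b _ hup2
    have e2' := step2 A' G' Q' hQz' K1' K1b' _ hup2
    have hcS : ∑ s ∈ Finset.univ.filter (fun u => t ≤ u), (2 * A s + Pf Q s + G s)
        = ∑ s ∈ Finset.univ.filter (fun u => t ≤ u), (2 * A' s + Pf Q' s + G' s) :=
      Finset.sum_congr rfl (fun s _ => hc s)
    have hcS2 : ∑ s ∈ Finset.univ.filter (fun u => t < u), (2 * A s + Pf Q s + G s)
        = ∑ s ∈ Finset.univ.filter (fun u => t < u), (2 * A' s + Pf Q' s + G' s) :=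
      Finset.sum_congr rfl (fun s _ => hc s)
    have hGS : ∑ s ∈ Finset.univ.filter (fun u => t ≤ u), G s
        = ∑ s ∈ Finset.univ.filter (fun u => t ≤ u), G' s := by
      rw [e1, e1', hYY, hcS]
    have hGS2 : ∑ s ∈ Finset.univ.filter (fun u => t < u), G s
        = ∑ s ∈ Finset.univ.filter (fun u => t < u), G' s := by
      rw [e2, e2', hYY, hcS2]
    have hins : Finset.univ.filter (fun u => t ≤ u)
        = insert t (Finset.univ.filter (fun u => t < u)) := by
      ext u
      simp only [Finset.mem_filter, Finset.mem_univ, true_and, Finset.mem_insert]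
      constructor
      · intro h
        rcases eq_or_lt_of_le h with h | h
        · exact Or.inl h.symm
        · exact Or.inr h
      · rintro (h | h)
        · exact le_of_eq h.symm
        · exact le_of_lt h
    have hnotmem : t ∉ Finset.univ.filter (fun u => t < u) := by
      simp
    rw [hins, Finset.sum_insert hnotmem, Finset.sum_insert hnotmem] at hGS
    omega
  have hG : G = G' := funext hGeq
  -- Step 3
  have hc2 : ∀ t, 2 * A t + Pf Q t = 2 * A' t + Pf Q' t := by
    intro t
    have h1 := hc t
    have h2 := hGeq t
    omega
  obtain ⟨hA, hQ⟩ := step3 (∑ t, (2 * A t + Pf Q t)) A A' Q Q' hok hok' hc2 (le_refl _)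
  refine ⟨by omega, by omega, hA, hG, hQ⟩

end DComb


open MvPolynomial

namespace DHelper

variable {m : ℕ}

def dvarEquiv (m : ℕ) :
    (Unit ⊕ Unit ⊕ Fin (m-1) ⊕ Fin (m-1) ⊕
      {st : Fin (m-1) × Fin (m-1) // st.1 < st.2} ⊕ Fin (m-1)) ≃ DVar m where
  toFun x := match x with
    | .inl _ => .x1
    | .inr (.inl _) => .xn
    | .inr (.inr (.inl t)) => .xJ t
    | .inr (.inr (.inr (.inl t))) => .xJc t
    | .inr (.inr (.inr (.inr (.inl st)))) => .xP st.1.1 st.1.2 st.2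
    | .inr (.inr (.inr (.inr (.inr t)))) => .y t
  invFun v := match v with
    | .x1 => .inl ()
    | .xn => .inr (.inl ())
    | .xJ t => .inr (.inr (.inl t))
    | .xJc t => .inr (.inr (.inr (.inl t)))
    | .xP s t h => .inr (.inr (.inr (.inr (.inl ⟨(s,t), h⟩))))
    | .y t => .inr (.inr (.inr (.inr (.inr t))))
  left_inv x := by rcases x with _|_|_|_|⟨⟨s,t⟩,h⟩|_ <;> rfl
  right_inv v := by cases v <;> rfl

noncomputable instance : Fintype (DVar m) := Fintype.ofEquiv _ (dvarEquiv m)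

lemma sum_dvar {M : Type*} [AddCommMonoid M] (f : DVar m → M) :
    ∑ v : DVar m, f v
      = f .x1 + f .xn + (∑ t, f (.xJ t)) + (∑ t, f (.xJc t))
        + (∑ s, ∑ t, if h : s < t then f (.xP s t h) else 0)
        + (∑ t, f (.y t)) := by
  classical
  have h0 : ∑ v : DVar m, f v
      = ∑ x : (Unit ⊕ Unit ⊕ Fin (m-1) ⊕ Fin (m-1) ⊕
          {st : Fin (m-1) × Fin (m-1) // st.1 < st.2} ⊕ Fin (m-1)), f (dvarEquiv m x) :=
    (Fintype.sum_equiv (dvarEquiv m) _ f (fun _ => rfl)).symm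
  rw [h0]
  rw [Fintype.sum_sum_type, Fintype.sum_sum_type, Fintype.sum_sum_type,
    Fintype.sum_sum_type, Fintype.sum_sum_type]
  simp only [Fintype.sum_unique, dvarEquiv, Equiv.coe_fn_mk]
  have hsub : (∑ x : {st : Fin (m-1) × Fin (m-1) // st.1 < st.2},
      f (.xP x.1.1 x.1.2 x.2))
      = ∑ s, ∑ t, if h : s < t then f (.xP s t h) else 0 := by
    set F : Fin (m-1) × Fin (m-1) → M :=
      fun st => if h : st.1 < st.2 then f (.xP st.1 st.2 h) else 0 with hF
    have h1 : (∑ x : {st : Fin (m-1) × Fin (m-1) // st.1 < st.2}, f (.xP x.1.1 x.1.2 x.2))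
        = ∑ x : {st : Fin (m-1) × Fin (m-1) // st.1 < st.2}, F x.1 := by
      apply Finset.sum_congr rfl
      intro x _
      simp only [hF]
      rw [dif_pos x.2]
    have h2 : (∑ x : {st : Fin (m-1) × Fin (m-1) // st.1 < st.2}, F x.1)
        = ∑ st ∈ Finset.univ.filter (fun st : Fin (m-1) × Fin (m-1) => st.1 < st.2), F st := by
      rw [← Finset.sum_subtype (Finset.univ.filter
        (fun st : Fin (m-1) × Fin (m-1) => st.1 < st.2)) (by simp) F]
    have h3 : (∑ st ∈ Finset.univ.filter
        (fun st : Fin (m-1) × Fin (m-1) => st.1 < st.2), F st)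
        = ∑ st : Fin (m-1) × Fin (m-1), F st := by
      apply Finset.sum_subset (Finset.filter_subset _ _)
      intro st _ hst
      simp only [Finset.mem_filter, Finset.mem_univ, true_and] at hst
      simp only [hF]
      rw [dif_neg hst]
    rw [h1, h2, h3, Fintype.sum_prod_type]
  rw [hsub]
  abel

/-- the weight (exponent vector of the image monomial) of each variable -/
noncomputable def wtv (m : ℕ) : DVar m → (ℕ →₀ ℕ)
  | .x1 => Finsupp.single 1 2
  | .xn => Finsupp.single (2*m) 2
  | .xJ t => Finsupp.single (2*t.val+3) 2
  | .xJc t => Finsupp.single (2*t.val+2) 1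
  | .xP s t _ => Finsupp.single (2*s.val+3) 1 + Finsupp.single (2*t.val+3) 1
  | .y t => Finsupp.single (2*t.val+3) 1 + Finsupp.single 1 1 + Finsupp.single (2*m) 1

lemma dImage_eq (K : Type*) [Field K] (m : ℕ) (v : DVar m) :
    dImage K m v = monomial (wtv m v) (1 : K) := by
  have hX : ∀ n : ℕ, (X n : MvPolynomial ℕ K) = monomial (Finsupp.single n 1) 1 := fun n => rfl
  cases v <;>
    simp [dImage, wtv, hX, monomial_pow, monomial_mul, Finsupp.smul_single]

lemma prod_monomial {K : Type*} [Field K] {ι : Type*} (s : Finset ι) (f : ι → (ℕ →₀ ℕ)) :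
    (∏ i ∈ s, (monomial (f i) (1:K))) = monomial (∑ i ∈ s, f i) 1 := by
  classical
  induction s using Finset.cons_induction with
  | empty => simp
  | cons a s ha ih => rw [Finset.prod_cons, Finset.sum_cons, ih, monomial_mul, one_mul]

lemma piD_monomial (K : Type*) [Field K] (m : ℕ) (d : DVar m →₀ ℕ) :
    piD K m (monomial d (1:K)) = monomial (∑ v ∈ d.support, d v • wtv m v) (1 : K) := by
  rw [piD, aeval_monomial, map_one, one_mul]
  rw [Finsupp.prod]
  have h1 : ∀ v ∈ d.support, dImage K m v ^ d v = monomial (d v • wtv m v) (1:K) := by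
    intro v _
    rw [dImage_eq, monomial_pow, one_pow]
  rw [Finset.prod_congr rfl h1, prod_monomial]

-- coordinate-evaluation lemmas
section coords

lemma w1_x1 : (wtv m .x1) 1 = 2 := by
  rw [wtv, Finsupp.single_apply, if_pos rfl]
lemma w1_xn : (wtv m .xn) 1 = 0 := by
  rw [wtv, Finsupp.single_apply, if_neg (show ¬(2*m = 1) by omega)]
lemma w1_xJ (s : Fin (m-1)) : (wtv m (.xJ s)) 1 = 0 := by
  rw [wtv, Finsupp.single_apply, if_neg (show ¬(2*s.val+3 = 1) by omega)]
lemma w1_xJc (s : Fin (m-1)) : (wtv m (.xJc s)) 1 = 0 := by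
  rw [wtv, Finsupp.single_apply, if_neg (show ¬(2*s.val+2 = 1) by omega)]
lemma w1_xP (s t : Fin (m-1)) (h : s < t) : (wtv m (.xP s t h)) 1 = 0 := by
  rw [wtv, Finsupp.add_apply, Finsupp.single_apply, Finsupp.single_apply,
    if_neg (show ¬(2*s.val+3 = 1) by omega), if_neg (show ¬(2*t.val+3 = 1) by omega)]
  omega
lemma w1_y (s : Fin (m-1)) : (wtv m (.y s)) 1 = 1 := by
  rw [wtv, Finsupp.add_apply, Finsupp.add_apply, Finsupp.single_apply, Finsupp.single_apply,
    Finsupp.single_apply, if_neg (show ¬(2*s.val+3 = 1) by omega), if_pos rfl,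
    if_neg (show ¬(2*m = 1) by omega)]
  omega

lemma wn_x1 (hm : 2 ≤ m) : (wtv m .x1) (2*m) = 0 := by
  rw [wtv, Finsupp.single_apply, if_neg (show ¬(1 = 2*m) by omega)]
lemma wn_xn : (wtv m .xn) (2*m) = 2 := by
  rw [wtv, Finsupp.single_apply, if_pos rfl]
lemma wn_xJ (s : Fin (m-1)) : (wtv m (.xJ s)) (2*m) = 0 := by
  rw [wtv, Finsupp.single_apply, if_neg (show ¬(2*s.val+3 = 2*m) by omega)]
lemma wn_xJc (s : Fin (m-1)) : (wtv m (.xJc s)) (2*m) = 0 := by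
  have := s.isLt
  rw [wtv, Finsupp.single_apply, if_neg (show ¬(2*s.val+2 = 2*m) by omega)]
lemma wn_xP (s t : Fin (m-1)) (h : s < t) : (wtv m (.xP s t h)) (2*m) = 0 := by
  rw [wtv, Finsupp.add_apply, Finsupp.single_apply, Finsupp.single_apply,
    if_neg (show ¬(2*s.val+3 = 2*m) by omega), if_neg (show ¬(2*t.val+3 = 2*m) by omega)]
  omega
lemma wn_y (hm : 2 ≤ m) (s : Fin (m-1)) : (wtv m (.y s)) (2*m) = 1 := by
  rw [wtv, Finsupp.add_apply, Finsupp.add_apply, Finsupp.single_apply, Finsupp.single_apply,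
    Finsupp.single_apply, if_neg (show ¬(2*s.val+3 = 2*m) by omega),
    if_neg (show ¬(1 = 2*m) by omega), if_pos rfl]
  omega

variable (t : Fin (m-1))

lemma we_x1 : (wtv m .x1) (2*t.val+2) = 0 := by
  rw [wtv, Finsupp.single_apply, if_neg (show ¬(1 = 2*t.val+2) by omega)]
lemma we_xn : (wtv m .xn) (2*t.val+2) = 0 := by
  have := t.isLt
  rw [wtv, Finsupp.single_apply, if_neg (show ¬(2*m = 2*t.val+2) by omega)]
lemma we_xJ (s : Fin (m-1)) : (wtv m (.xJ s)) (2*t.val+2) = 0 := by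
  rw [wtv, Finsupp.single_apply, if_neg (show ¬(2*s.val+3 = 2*t.val+2) by omega)]
lemma we_xJc (s : Fin (m-1)) :
    (wtv m (.xJc s)) (2*t.val+2) = if s = t then 1 else 0 := by
  rw [wtv, Finsupp.single_apply]
  by_cases h : s = t
  · subst h; rw [if_pos rfl, if_pos rfl]
  · have hv : s.val ≠ t.val := fun hh => h (Fin.ext hh)
    rw [if_neg (show ¬(2*s.val+2 = 2*t.val+2) by omega), if_neg h]
lemma we_xP (s s' : Fin (m-1)) (h : s < s') : (wtv m (.xP s s' h)) (2*t.val+2) = 0 := by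
  rw [wtv, Finsupp.add_apply, Finsupp.single_apply, Finsupp.single_apply,
    if_neg (show ¬(2*s.val+3 = 2*t.val+2) by omega),
    if_neg (show ¬(2*s'.val+3 = 2*t.val+2) by omega)]
  omega
lemma we_y (s : Fin (m-1)) : (wtv m (.y s)) (2*t.val+2) = 0 := by
  have := t.isLt
  rw [wtv, Finsupp.add_apply, Finsupp.add_apply, Finsupp.single_apply, Finsupp.single_apply,
    Finsupp.single_apply, if_neg (show ¬(2*s.val+3 = 2*t.val+2) by omega),
    if_neg (show ¬(1 = 2*t.val+2) by omega), if_neg (show ¬(2*m = 2*t.val+2) by omega)]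
  omega

lemma wo_x1 : (wtv m .x1) (2*t.val+3) = 0 := by
  rw [wtv, Finsupp.single_apply, if_neg (show ¬(1 = 2*t.val+3) by omega)]
lemma wo_xn : (wtv m .xn) (2*t.val+3) = 0 := by
  rw [wtv, Finsupp.single_apply, if_neg (show ¬(2*m = 2*t.val+3) by omega)]
lemma wo_xJ (s : Fin (m-1)) :
    (wtv m (.xJ s)) (2*t.val+3) = if s = t then 2 else 0 := by
  rw [wtv, Finsupp.single_apply]
  by_cases h : s = t
  · subst h; rw [if_pos rfl, if_pos rfl]
  · have hv : s.val ≠ t.val := fun hh => h (Fin.ext hh)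
    rw [if_neg (show ¬(2*s.val+3 = 2*t.val+3) by omega), if_neg h]
lemma wo_xJc (s : Fin (m-1)) : (wtv m (.xJc s)) (2*t.val+3) = 0 := by
  rw [wtv, Finsupp.single_apply, if_neg (show ¬(2*s.val+2 = 2*t.val+3) by omega)]
lemma wo_xP (s s' : Fin (m-1)) (h : s < s') :
    (wtv m (.xP s s' h)) (2*t.val+3)
      = (if s = t then 1 else 0) + (if s' = t then 1 else 0) := by
  rw [wtv, Finsupp.add_apply, Finsupp.single_apply, Finsupp.single_apply]
  congr 1
  · by_cases h1 : s = t
    · subst h1; rw [if_pos rfl, if_pos rfl]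
    · have hv : s.val ≠ t.val := fun hh => h1 (Fin.ext hh)
      rw [if_neg (show ¬(2*s.val+3 = 2*t.val+3) by omega), if_neg h1]
  · by_cases h1 : s' = t
    · subst h1; rw [if_pos rfl, if_pos rfl]
    · have hv : s'.val ≠ t.val := fun hh => h1 (Fin.ext hh)
      rw [if_neg (show ¬(2*s'.val+3 = 2*t.val+3) by omega), if_neg h1]
lemma wo_y (s : Fin (m-1)) :
    (wtv m (.y s)) (2*t.val+3) = if s = t then 1 else 0 := by
  rw [wtv, Finsupp.add_apply, Finsupp.add_apply, Finsupp.single_apply, Finsupp.single_apply,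
    Finsupp.single_apply, if_neg (show ¬(1 = 2*t.val+3) by omega),
    if_neg (show ¬(2*m = 2*t.val+3) by omega)]
  by_cases h : s = t
  · subst h; rw [if_pos rfl, if_pos rfl]; omega
  · have hv : s.val ≠ t.val := fun hh => h (Fin.ext hh)
    rw [if_neg (show ¬(2*s.val+3 = 2*t.val+3) by omega), if_neg h]
    omega

end coords

lemma coord_one (d : DVar m →₀ ℕ) :
    (∑ v : DVar m, d v * (wtv m v) 1) = 2 * d .x1 + ∑ t, d (.y t) := by
  rw [sum_dvar (fun v => d v * (wtv m v) 1)]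
  simp only [w1_x1, w1_xn, w1_xJ, w1_xJc, w1_xP, w1_y, mul_zero, mul_one,
    Finset.sum_const_zero, add_zero, zero_add, dite_eq_ite, ite_self]
  ring

lemma coord_n (hm : 2 ≤ m) (d : DVar m →₀ ℕ) :
    (∑ v : DVar m, d v * (wtv m v) (2*m)) = 2 * d .xn + ∑ t, d (.y t) := by
  rw [sum_dvar (fun v => d v * (wtv m v) (2*m))]
  simp only [wn_x1 hm, wn_xn, wn_xJ, wn_xJc, wn_xP, wn_y hm, mul_zero, mul_one,
    Finset.sum_const_zero, add_zero, zero_add, dite_eq_ite, ite_self]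
  ring

lemma coord_even (d : DVar m →₀ ℕ) (t : Fin (m-1)) :
    (∑ v : DVar m, d v * (wtv m v) (2*t.val+2)) = d (.xJc t) := by
  rw [sum_dvar (fun v => d v * (wtv m v) (2*t.val+2))]
  simp only [we_x1, we_xn, we_xJ, we_xJc t, we_xP t, we_y, mul_zero, mul_ite, mul_one,
    Finset.sum_const_zero, add_zero, zero_add, dite_eq_ite, ite_self,
    Finset.sum_ite_eq', Finset.mem_univ, if_true]

lemma pair_part (d : DVar m →₀ ℕ) (t : Fin (m-1)) :
    (∑ s, ∑ t', if h : s < t' then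
        d (.xP s t' h) * ((if s = t then 1 else 0) + (if t' = t then 1 else 0)) else 0)
      = DComb.Pf (fun s t' => if h : s < t' then d (.xP s t' h) else 0) t := by
  classical
  set Q : Fin (m-1) → Fin (m-1) → ℕ :=
    fun s t' => if h : s < t' then d (.xP s t' h) else 0 with hQ
  have key : ∀ s t' : Fin (m-1),
      (if h : s < t' then
        d (.xP s t' h) * ((if s = t then 1 else 0) + (if t' = t then 1 else 0)) else 0)
        = (if t' = t then Q s t' else 0) + (if s = t then Q s t' else 0) := by
    intro s t'
    by_cases h : s < t'
    · simp only [hQ]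
      rw [dif_pos h, dif_pos h]
      split_ifs <;> ring
    · simp only [hQ]
      rw [dif_neg h]
      split_ifs <;> simp [dif_neg h]
  have h1 : (∑ s, ∑ t', if h : s < t' then
      d (.xP s t' h) * ((if s = t then 1 else 0) + (if t' = t then 1 else 0)) else 0)
      = ∑ s, ((∑ t', if t' = t then Q s t' else 0) + (∑ t', if s = t then Q s t' else 0)) := by
    apply Finset.sum_congr rfl
    intro s _
    rw [← Finset.sum_add_distrib]
    exact Finset.sum_congr rfl (fun t' _ => key s t')
  rw [h1]
  have h2 : ∀ s : Fin (m-1), (∑ t', if t' = t then Q s t' else 0) = Q s t := by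
    intro s
    rw [Finset.sum_ite_eq' Finset.univ t (Q s)]
    simp
  have h3 : ∀ s : Fin (m-1), (∑ t', if s = t then Q s t' else 0)
      = if s = t then (∑ t', Q s t') else 0 := by
    intro s
    by_cases h : s = t <;> simp [h]
  have h4 : (∑ s, ((∑ t', if t' = t then Q s t' else 0) + (∑ t', if s = t then Q s t' else 0)))
      = (∑ s, Q s t) + (∑ t', Q t t') := by
    rw [Finset.sum_add_distrib]
    congr 1
    · exact Finset.sum_congr rfl (fun s _ => h2 s)
    · rw [show (∑ s, ∑ t', if s = t then Q s t' else 0)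
        = ∑ s, if s = t then (∑ t', Q s t') else 0 from
        Finset.sum_congr rfl (fun s _ => h3 s)]
      rw [Finset.sum_ite_eq' Finset.univ t (fun s => ∑ t', Q s t')]
      simp
  rw [h4]
  unfold DComb.Pf
  rw [Finset.sum_add_distrib]

lemma coord_odd (d : DVar m →₀ ℕ) (t : Fin (m-1)) :
    (∑ v : DVar m, d v * (wtv m v) (2*t.val+3))
      = 2 * d (.xJ t)
        + DComb.Pf (fun s t' => if h : s < t' then d (.xP s t' h) else 0) t
        + d (.y t) := by
  rw [sum_dvar (fun v => d v * (wtv m v) (2*t.val+3))]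
  simp only [wo_x1, wo_xn, wo_xJ t, wo_xJc, wo_xP t, wo_y t, mul_zero, mul_ite, mul_one,
    Finset.sum_const_zero, add_zero, zero_add,
    Finset.sum_ite_eq', Finset.mem_univ, if_true]
  rw [← pair_part d t]
  have : ∀ s t' : Fin (m-1),
      (if h : s < t' then
        d (.xP s t' h) * ((if s = t then 1 else 0) + (if t' = t then 1 else 0)) else 0)
      = (if h : s < t' then
        ((if s = t then d (.xP s t' h) else 0) + (if t' = t then d (.xP s t' h) else 0)) else 0) := by
    intro s t'
    by_cases h : s < t'
    · rw [dif_pos h, dif_pos h]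
      split_ifs <;> ring
    · rw [dif_neg h, dif_neg h]
  rw [show (∑ s, ∑ t', if h : s < t' then
        d (.xP s t' h) * ((if s = t then 1 else 0) + (if t' = t then 1 else 0)) else 0)
      = ∑ s, ∑ t', if h : s < t' then
        ((if s = t then d (.xP s t' h) else 0) + (if t' = t then d (.xP s t' h) else 0)) else 0 from
    Finset.sum_congr rfl (fun s _ => Finset.sum_congr rfl (fun t' _ => this s t'))]
  ring

end DHelper


open MvPolynomial

namespace DHelper

variable {m : ℕ}

lemma xJ_ne {i j : Fin (m-1)} (h : i ≠ j) : (DVar.xJ i : DVar m) ≠ .xJ j := by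
  intro he; apply h; injection he

lemma y_ne {i j : Fin (m-1)} (h : i ≠ j) : (DVar.y i : DVar m) ≠ .y j := by
  intro he; apply h; injection he

lemma xP_ne {s t s' t' : Fin (m-1)} {h1 : s < t} {h1' : s' < t'} (h : s ≠ s' ∨ t ≠ t') :
    (DVar.xP s t h1 : DVar m) ≠ .xP s' t' h1' := by
  intro he
  injection he with e1 e2
  rcases h with h | h
  · exact h e1
  · exact h e2

lemma dvd_two {K : Type*} [Field K] {d : DVar m →₀ ℕ} {v w : DVar m} (hvw : v ≠ w)
    (h1 : 0 < d v) (h2 : 0 < d w) :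
    (X v * X w : MvPolynomial (DVar m) K) ∣ monomial d 1 := by
  classical
  have hX : ∀ u : DVar m, (X u : MvPolynomial (DVar m) K)
      = monomial (Finsupp.single u 1) 1 := fun _ => rfl
  rw [hX, hX, monomial_mul, one_mul, monomial_dvd_monomial]
  refine ⟨Or.inr ?_, dvd_refl 1⟩
  intro a
  rw [Finsupp.add_apply, Finsupp.single_apply, Finsupp.single_apply]
  by_cases ha : v = a
  · by_cases hb : w = a
    · exact absurd (ha.trans hb.symm) hvw
    · rw [if_pos ha, if_neg hb, ← ha]; omega
  · by_cases hb : w = a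
    · rw [if_neg ha, if_pos hb, ← hb]; omega
    · rw [if_neg ha, if_neg hb]; omega

lemma dvd_three {K : Type*} [Field K] {d : DVar m →₀ ℕ} {v w z : DVar m}
    (hvw : v ≠ w) (hvz : v ≠ z) (hwz : w ≠ z)
    (h1 : 0 < d v) (h2 : 0 < d w) (h3 : 0 < d z) :
    (X v * X w * X z : MvPolynomial (DVar m) K) ∣ monomial d 1 := by
  classical
  have hX : ∀ u : DVar m, (X u : MvPolynomial (DVar m) K)
      = monomial (Finsupp.single u 1) 1 := fun _ => rfl
  rw [hX, hX, hX, monomial_mul, monomial_mul, one_mul, one_mul, monomial_dvd_monomial]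
  refine ⟨Or.inr ?_, dvd_refl 1⟩
  intro a
  rw [Finsupp.add_apply, Finsupp.add_apply, Finsupp.single_apply, Finsupp.single_apply,
    Finsupp.single_apply]
  by_cases ha : v = a
  · have hb : ¬ w = a := fun hb => hvw (ha.trans hb.symm)
    have hc : ¬ z = a := fun hc => hvz (ha.trans hc.symm)
    rw [if_pos ha, if_neg hb, if_neg hc, ← ha]; omega
  · by_cases hb : w = a
    · have hc : ¬ z = a := fun hc => hwz (hb.trans hc.symm)
      rw [if_neg ha, if_pos hb, if_neg hc, ← hb]; omega
    · by_cases hc : z = a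
      · rw [if_neg ha, if_neg hb, if_pos hc, ← hc]; omega
      · rw [if_neg ha, if_neg hb, if_neg hc]; omega

end DHelper

/-- if `M` and `M′` are monomials of `R` such that no monomial of
`in(𝒢_{D_{2m}})` divides `M` and no monomial of `in(𝒢_{D_{2m}})` divides `M′`,
then `π(M) = π(M′)` implies `M = M′`. -/
theorem piD_inj_on_standard_monomials (K : Type*) [Field K] (m : ℕ) (hm : 2 ≤ m)
    (M M' : MvPolynomial (DVar m) K)
    (hM : ∃ d : DVar m →₀ ℕ, M = monomial d (1 : K))
    (hM' : ∃ d : DVar m →₀ ℕ, M' = monomial d (1 : K))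
    (hMdvd : ∀ g ∈ inGD K m, ¬ g ∣ M)
    (hM'dvd : ∀ g ∈ inGD K m, ¬ g ∣ M')
    (heq : piD K m M = piD K m M') :
    M = M' := by
  classical
  obtain ⟨d, rfl⟩ := hM
  obtain ⟨d', rfl⟩ := hM'
  rw [DHelper.piD_monomial, DHelper.piD_monomial] at heq
  have hW : (∑ v ∈ d.support, d v • DHelper.wtv m v)
      = ∑ v ∈ d'.support, d' v • DHelper.wtv m v :=
    monomial_left_injective (R := K) one_ne_zero heq
  have hWu : ∀ u : ℕ, (∑ v : DVar m, d v * (DHelper.wtv m v) u)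
      = ∑ v : DVar m, d' v * (DHelper.wtv m v) u := by
    intro u
    have h1 : ∀ e : DVar m →₀ ℕ,
        ((∑ v ∈ e.support, e v • DHelper.wtv m v) u)
          = ∑ v : DVar m, e v * (DHelper.wtv m v) u := by
      intro e
      rw [Finset.sum_apply']
      rw [show (∑ v ∈ e.support, (e v • DHelper.wtv m v) u)
          = ∑ v ∈ e.support, e v * (DHelper.wtv m v) u from
        Finset.sum_congr rfl (fun v _ => by rw [Finsupp.smul_apply, smul_eq_mul])]
      exact Finset.sum_subset (Finset.subset_univ _)
        (fun v _ hv => by rw [Finsupp.notMem_support_iff.1 hv, zero_mul])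
    rw [← h1 d, ← h1 d', hW]
  have key := DComb.comb (N := m - 1) (d .x1) (d .xn) (d' .x1) (d' .xn)
    (fun t => d (.xJ t)) (fun t => d (.y t))
    (fun t => d' (.xJ t)) (fun t => d' (.y t))
    (fun s t => if h : s < t then d (.xP s t h) else 0)
    (fun s t => if h : s < t then d' (.xP s t h) else 0)
    (fun s t h => dif_neg h) (fun s t h => dif_neg h)
    -- C1a
    (by
      rintro i j k l hij hjk hkl ⟨h1, h2⟩
      simp only [dif_pos (hij.trans hjk)] at h1
      simp only [dif_pos (hjk.trans hkl)] at h2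
      exact hMdvd _ (Or.inl ⟨i, j, k, l, hij, hjk, hkl, Or.inl rfl⟩)
        (DHelper.dvd_two (DHelper.xP_ne (Or.inl (ne_of_lt hij))) h1 h2))
    -- C1b
    (by
      rintro i j k l hij hjk hkl ⟨h1, h2⟩
      simp only [dif_pos (hij.trans (hjk.trans hkl))] at h1
      simp only [dif_pos hjk] at h2
      exact hMdvd _ (Or.inl ⟨i, j, k, l, hij, hjk, hkl, Or.inr rfl⟩)
        (DHelper.dvd_two (DHelper.xP_ne (Or.inl (ne_of_lt hij))) h1 h2))
    -- C2a
    (by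
      rintro i j k hij hjk ⟨h1, h2⟩
      simp only [dif_pos hij] at h1
      simp only [dif_pos (hij.trans hjk)] at h2
      exact hMdvd _ (Or.inr (Or.inl ⟨i, j, k, hij, hjk, Or.inl rfl⟩))
        (DHelper.dvd_two (DHelper.xP_ne (Or.inr (ne_of_lt hjk))) h1 h2))
    -- C2b
    (by
      rintro i j k hij hjk ⟨h1, h2⟩
      simp only [dif_pos (hij.trans hjk)] at h2
      exact hMdvd _ (Or.inr (Or.inl ⟨i, j, k, hij, hjk, Or.inr (Or.inl rfl)⟩))
        (DHelper.dvd_two (by simp) h1 h2))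
    -- C2c
    (by
      rintro i j k hij hjk ⟨h1, h2⟩
      simp only [dif_pos hij] at h2
      exact hMdvd _ (Or.inr (Or.inl ⟨i, j, k, hij, hjk, Or.inr (Or.inr (Or.inl rfl))⟩))
        (DHelper.dvd_two (by simp) h1 h2))
    -- C2d
    (by
      rintro i j k hij hjk ⟨h1, h2⟩
      simp only [dif_pos hjk] at h1
      exact hMdvd _ (Or.inr (Or.inl ⟨i, j, k, hij, hjk, Or.inr (Or.inr (Or.inr (Or.inl rfl)))⟩))
        (DHelper.dvd_two (by simp) h1 h2))
    -- C2e
    (by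
      rintro i j k hij hjk ⟨h1, h2⟩
      simp only [dif_pos (hij.trans hjk)] at h1
      exact hMdvd _ (Or.inr (Or.inl ⟨i, j, k, hij, hjk, Or.inr (Or.inr (Or.inr (Or.inr rfl)))⟩))
        (DHelper.dvd_two (by simp) h1 h2))
    -- C3a
    (by
      rintro i j hij ⟨h1, h2⟩
      exact hMdvd _ (Or.inr (Or.inr (Or.inl ⟨i, j, hij, Or.inl rfl⟩)))
        (DHelper.dvd_two (DHelper.xJ_ne (ne_of_lt hij)) h1 h2))
    -- C3b
    (by
      rintro i j hij ⟨h1, h2⟩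
      exact hMdvd _ (Or.inr (Or.inr (Or.inl ⟨i, j, hij, Or.inr (Or.inl rfl)⟩)))
        (DHelper.dvd_two (by simp) h1 h2))
    -- C3c
    (by
      rintro i j hij ⟨h1, h2⟩
      simp only [dif_pos hij] at h1
      exact hMdvd _ (Or.inr (Or.inr (Or.inl ⟨i, j, hij, Or.inr (Or.inr (Or.inl rfl))⟩)))
        (DHelper.dvd_two (by simp) h1 h2))
    -- C3d
    (by
      rintro i j hij ⟨h1, h2, h3⟩
      simp only [dif_pos hij] at h1
      exact hMdvd _ (Or.inr (Or.inr (Or.inl ⟨i, j, hij, Or.inr (Or.inr (Or.inr rfl))⟩)))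
        (DHelper.dvd_three (by simp) (by simp) (by simp) h1 h2 h3))
    -- C4
    (by
      rintro i ⟨h1, h2, h3⟩
      exact hMdvd _ (Or.inr (Or.inr (Or.inr ⟨i, rfl⟩)))
        (DHelper.dvd_three (by simp) (by simp) (by simp) h1 h2 h3))
    -- primed versions
    (by
      rintro i j k l hij hjk hkl ⟨h1, h2⟩
      simp only [dif_pos (hij.trans hjk)] at h1
      simp only [dif_pos (hjk.trans hkl)] at h2
      exact hM'dvd _ (Or.inl ⟨i, j, k, l, hij, hjk, hkl, Or.inl rfl⟩)
        (DHelper.dvd_two (DHelper.xP_ne (Or.inl (ne_of_lt hij))) h1 h2))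
    (by
      rintro i j k l hij hjk hkl ⟨h1, h2⟩
      simp only [dif_pos (hij.trans (hjk.trans hkl))] at h1
      simp only [dif_pos hjk] at h2
      exact hM'dvd _ (Or.inl ⟨i, j, k, l, hij, hjk, hkl, Or.inr rfl⟩)
        (DHelper.dvd_two (DHelper.xP_ne (Or.inl (ne_of_lt hij))) h1 h2))
    (by
      rintro i j k hij hjk ⟨h1, h2⟩
      simp only [dif_pos hij] at h1
      simp only [dif_pos (hij.trans hjk)] at h2
      exact hM'dvd _ (Or.inr (Or.inl ⟨i, j, k, hij, hjk, Or.inl rfl⟩))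
        (DHelper.dvd_two (DHelper.xP_ne (Or.inr (ne_of_lt hjk))) h1 h2))
    (by
      rintro i j k hij hjk ⟨h1, h2⟩
      simp only [dif_pos (hij.trans hjk)] at h2
      exact hM'dvd _ (Or.inr (Or.inl ⟨i, j, k, hij, hjk, Or.inr (Or.inl rfl)⟩))
        (DHelper.dvd_two (by simp) h1 h2))
    (by
      rintro i j k hij hjk ⟨h1, h2⟩
      simp only [dif_pos hij] at h2
      exact hM'dvd _ (Or.inr (Or.inl ⟨i, j, k, hij, hjk, Or.inr (Or.inr (Or.inl rfl))⟩))
        (DHelper.dvd_two (by simp) h1 h2))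
    (by
      rintro i j k hij hjk ⟨h1, h2⟩
      simp only [dif_pos hjk] at h1
      exact hM'dvd _ (Or.inr (Or.inl ⟨i, j, k, hij, hjk, Or.inr (Or.inr (Or.inr (Or.inl rfl)))⟩))
        (DHelper.dvd_two (by simp) h1 h2))
    (by
      rintro i j k hij hjk ⟨h1, h2⟩
      simp only [dif_pos (hij.trans hjk)] at h1
      exact hM'dvd _ (Or.inr (Or.inl ⟨i, j, k, hij, hjk, Or.inr (Or.inr (Or.inr (Or.inr rfl)))⟩))
        (DHelper.dvd_two (by simp) h1 h2))
    (by
      rintro i j hij ⟨h1, h2⟩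
      exact hM'dvd _ (Or.inr (Or.inr (Or.inl ⟨i, j, hij, Or.inl rfl⟩)))
        (DHelper.dvd_two (DHelper.xJ_ne (ne_of_lt hij)) h1 h2))
    (by
      rintro i j hij ⟨h1, h2⟩
      exact hM'dvd _ (Or.inr (Or.inr (Or.inl ⟨i, j, hij, Or.inr (Or.inl rfl)⟩)))
        (DHelper.dvd_two (by simp) h1 h2))
    (by
      rintro i j hij ⟨h1, h2⟩
      simp only [dif_pos hij] at h1
      exact hM'dvd _ (Or.inr (Or.inr (Or.inl ⟨i, j, hij, Or.inr (Or.inr (Or.inl rfl))⟩)))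
        (DHelper.dvd_two (by simp) h1 h2))
    (by
      rintro i j hij ⟨h1, h2, h3⟩
      simp only [dif_pos hij] at h1
      exact hM'dvd _ (Or.inr (Or.inr (Or.inl ⟨i, j, hij, Or.inr (Or.inr (Or.inr rfl))⟩)))
        (DHelper.dvd_three (by simp) (by simp) (by simp) h1 h2 h3))
    (by
      rintro i ⟨h1, h2, h3⟩
      exact hM'dvd _ (Or.inr (Or.inr (Or.inr ⟨i, rfl⟩)))
        (DHelper.dvd_three (by simp) (by simp) (by simp) h1 h2 h3))
    -- he1
    (by
      have h := hWu 1
      rw [DHelper.coord_one, DHelper.coord_one] at h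
      exact h)
    -- hen
    (by
      have h := hWu (2 * m)
      rw [DHelper.coord_n hm, DHelper.coord_n hm] at h
      exact h)
    -- hc
    (by
      intro t
      have h := hWu (2 * t.val + 3)
      rw [DHelper.coord_odd, DHelper.coord_odd] at h
      exact h)
  obtain ⟨hα, hβ, hA, hG, hQ⟩ := key
  have hxJc : ∀ t : Fin (m-1), d (.xJc t) = d' (.xJc t) := by
    intro t
    have h := hWu (2 * t.val + 2)
    rwa [DHelper.coord_even, DHelper.coord_even] at h
  have hdd : d = d' := by
    apply Finsupp.ext
    intro v
    cases v with
    | x1 => exact hα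
    | xn => exact hβ
    | xJ t => exact congrFun hA t
    | xJc t => exact hxJc t
    | xP s t h =>
      have h2 := congrFun (congrFun hQ s) t
      simp only [dif_pos h, dif_pos h] at h2
      exact h2
    | y t => exact congrFun hG t
  rw [hdd]
end

section
/- The initial ideal of I_{D_{2m}} with respect to ≻^even is generated by squarefree monomials; explicitly, it is generated by the monomials x_{i,k}x_{j,ℓ} and x_{i,ℓ}x_{j,k} (i<j<k<ℓ in J), x_{i,j}x_{i,k}, x_j x_{i,k}, x_k x_{i,j}, x_{j,k}y_i, x_{i,k}y_j (i<j<k in J), x_i x_j, x_j y_i, x_{i,j}y_i, x_{i,j}x_1 x_n (i<j in J), and x_i x_1 x_n (i in J), each of which is a squarefree monomial. -/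
open MvPolynomial

/-- `degRevLexLT rank a b` : the exponent vector `a` is strictly smaller than `b` in the
(degree) reverse lexicographic order determined by the ranking `rank` of the variables
(smaller rank = greater variable): `a ≺ b` iff `a` has smaller total degree, or the total
degrees agree and in the least variable (i.e. largest rank) where they differ, `a` has the
larger exponent. -/
def degRevLexLT {σ : Type*} (rank : σ → ℕ) (a b : σ →₀ ℕ) : Prop :=
  (a.sum fun _ e => e) < (b.sum fun _ e => e) ∨
    ((a.sum fun _ e => e) = (b.sum fun _ e => e) ∧
      ∃ v, b v < a v ∧ ∀ w, rank v < rank w → a w = b w)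

/-- `IsLeadExp lt f d` : `d` is the exponent vector of the leading monomial of `f` with
respect to the strict term order `lt`. -/
def IsLeadExp {σ K : Type*} [Field K] (lt : (σ →₀ ℕ) → (σ →₀ ℕ) → Prop)
    (f : MvPolynomial σ K) (d : σ →₀ ℕ) : Prop :=
  d ∈ f.support ∧ ∀ e ∈ f.support, e ≠ d → lt e d

/-- The ideal of leading monomials (initial ideal) of an ideal `I` with respect to the
strict term order `lt`. -/
noncomputable def initialIdeal {σ K : Type*} [Field K] (lt : (σ →₀ ℕ) → (σ →₀ ℕ) → Prop)
    (I : Ideal (MvPolynomial σ K)) : Ideal (MvPolynomial σ K) :=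
  Ideal.span {p | ∃ f ∈ I, f ≠ 0 ∧ ∃ d, IsLeadExp lt f d ∧ p = monomial d (1 : K)}

/-- The ranking of the variables realising the variable order
`x_1 ≻ x_2 ≻ ⋯ ≻ x_n ≻ x_{j1,j2} ≻ x_{j3,j4} ≻ y_{k1} ≻ y_{k2}` (where `x_{j1,j2} ≻ x_{j3,j4}`
iff `j2 < j4`, or `j2 = j4` and `j1 < j3`, and `y_{k1} ≻ y_{k2}` iff `k1 < k2`); a smaller
rank means a greater variable. -/
def rankD (m : ℕ) : DVar m → ℕ
  | .x1 => 1
  | .xn => 2 * m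
  | .xJ t => 2 * t.val + 3
  | .xJc t => 2 * t.val + 2
  | .xP s t _ => 2 * m + 1 + t.val * (2 * m) + s.val
  | .y t => 10 * m * m + 10 * m + t.val

/-- The reverse lexicographic term order `≻^even` (as a strict "smaller-than" relation on
exponent vectors). -/
def precEven (m : ℕ) : (DVar m →₀ ℕ) → (DVar m →₀ ℕ) → Prop :=
  degRevLexLT (rankD m)

open MvPolynomial Finsupp
namespace DW

/-- weight (exponent vector of the image) of a variable -/
noncomputable def wD (m : ℕ) : DVar m → (ℕ →₀ ℕ)
  | .x1 => single 1 2
  | .xn => single (2*m) 2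
  | .xJ t => single (2*t.val+3) 2
  | .xJc t => single (2*t.val+2) 1
  | .xP s t _ => single (2*s.val+3) 1 + single (2*t.val+3) 1
  | .y t => single (2*t.val+3) 1 + single 1 1 + single (2*m) 1

lemma dImage_eq (K : Type*) [Field K] (m : ℕ) (v : DVar m) :
    dImage K m v = monomial (wD m v) 1 := by
  cases v <;>
    simp [dImage, wD, X, monomial_mul, monomial_pow, Finsupp.smul_single, two_smul,
      ← Finsupp.single_add]

/-- the linear map on exponents induced by the weights -/
noncomputable def AD (m : ℕ) (d : DVar m →₀ ℕ) : ℕ →₀ ℕ := d.sum fun v k => k • wD m v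

@[simp] lemma AD_zero (m : ℕ) : AD m 0 = 0 := by simp [AD]

lemma AD_single (m : ℕ) (v : DVar m) (k : ℕ) : AD m (single v k) = k • wD m v := by
  classical
  simp [AD, Finsupp.sum_single_index]

lemma AD_add (m : ℕ) (a b : DVar m →₀ ℕ) : AD m (a + b) = AD m a + AD m b := by
  classical
  simp [AD, Finsupp.sum_add_index', add_smul]

lemma AD_apply (m : ℕ) (d : DVar m →₀ ℕ) (c : ℕ) :
    AD m d c = ∑ v ∈ d.support, d v * wD m v c := by
  classical
  rw [AD, Finsupp.sum_apply]
  simp [Finsupp.sum, Finsupp.smul_apply]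

/-- total degree of an exponent vector -/
def degE {σ : Type*} (d : σ →₀ ℕ) : ℕ := d.sum fun _ e => e

@[simp] lemma degE_zero {σ : Type*} : degE (0 : σ →₀ ℕ) = 0 := by simp [degE]

lemma degE_add {σ : Type*} (a b : σ →₀ ℕ) : degE (a + b) = degE a + degE b := by
  classical
  simp [degE, Finsupp.sum_add_index']

@[simp] lemma degE_single {σ : Type*} (v : σ) (k : ℕ) : degE (single v k) = k := by
  classical
  simp [degE, Finsupp.sum_single_index]

lemma degE_eq_zero {σ : Type*} {d : σ →₀ ℕ} (h : degE d = 0) : d = 0 := by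
  classical
  have h' : ∀ v ∈ d.support, d v = 0 := by
    intro v hv
    exact (Finset.sum_eq_zero_iff.mp h) v hv
  ext v
  by_cases hv : v ∈ d.support
  · simpa using h' v hv
  · simpa using Finsupp.notMem_support_iff.mp hv

lemma coord_le_degE {σ : Type*} (d : σ →₀ ℕ) (v : σ) : d v ≤ degE d := by
  classical
  by_cases hv : v ∈ d.support
  · exact Finset.single_le_sum (f := fun w => d w) (fun _ _ => Nat.zero_le _) hv
  · simp [Finsupp.notMem_support_iff.mp hv]

/-- a term bound : each variable's contribution is at most the coordinate of `AD`. -/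
lemma term_le (m : ℕ) (d : DVar m →₀ ℕ) (v : DVar m) (c : ℕ) :
    d v * wD m v c ≤ AD m d c := by
  classical
  rw [AD_apply]
  by_cases hv : v ∈ d.support
  · exact Finset.single_le_sum (f := fun w => d w * wD m w c) (fun _ _ => Nat.zero_le _) hv
  · simp [Finsupp.notMem_support_iff.mp hv]

lemma source (m : ℕ) {d : DVar m →₀ ℕ} {c : ℕ} (h : 0 < AD m d c) :
    ∃ v, 0 < d v ∧ 0 < wD m v c := by
  classical
  rw [AD_apply] at h
  by_contra hc
  push_neg at hc
  have hz : ∑ v ∈ d.support, d v * wD m v c = 0 := by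
    apply Finset.sum_eq_zero
    intro v hv
    rcases Nat.eq_zero_or_pos (d v) with h0 | h0
    · simp [h0]
    · have hw : wD m v c = 0 := by
        have := hc v
        omega
      simp [hw]
  omega

end DW
namespace DW
open MvPolynomial Finsupp DVar

variable {m : ℕ}

lemma fin_ext' {a b : Fin (m-1)} (h : (a:ℕ) = b) : a = b := Fin.ext h

lemma source_odd {d : DVar m →₀ ℕ} {t : Fin (m-1)} (h : 0 < AD m d (2*t.val+3)) :
    0 < d (.xJ t) ∨ 0 < d (.y t) ∨ (∃ s hs, 0 < d (.xP s t hs)) ∨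
      (∃ u hu, 0 < d (.xP t u hu)) := by
  classical
  obtain ⟨v, hv, hw⟩ := source m h
  cases v with
  | x1 => simp [wD, Finsupp.single_apply] at hw <;> (try split_ifs at hw) <;> omega
  | xn => simp [wD, Finsupp.single_apply] at hw <;> (try split_ifs at hw) <;> omega
  | xJc u => simp [wD, Finsupp.single_apply] at hw <;> (try split_ifs at hw) <;> omega
  | xJ u =>
    simp only [wD, Finsupp.single_apply] at hw
    split_ifs at hw with hc
    · have : u = t := fin_ext' (by omega)
      subst this; exact Or.inl hv
    · omega
  | xP s u hsu =>
    simp only [wD, Finsupp.add_apply, Finsupp.single_apply] at hw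
    split_ifs at hw with h1 h2 h2
    · omega
    · have : s = t := fin_ext' (by omega)
      subst this
      exact Or.inr (Or.inr (Or.inr ⟨u, hsu, hv⟩))
    · have : u = t := fin_ext' (by omega)
      subst this
      exact Or.inr (Or.inr (Or.inl ⟨s, hsu, hv⟩))
    · omega
  | y u =>
    simp only [wD, Finsupp.add_apply, Finsupp.single_apply] at hw
    split_ifs at hw <;>
      first
      | omega
      | (rename_i h1 _ _
         have : u = t := fin_ext' (by omega)
         subst this; exact Or.inr (Or.inl hv))

lemma source_one {d : DVar m →₀ ℕ} (h : 0 < AD m d 1) :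
    0 < d .x1 ∨ ∃ t, 0 < d (.y t) := by
  classical
  obtain ⟨v, hv, hw⟩ := source m h
  cases v with
  | x1 => exact Or.inl hv
  | xn => simp [wD, Finsupp.single_apply] at hw <;> (try split_ifs at hw) <;> omega
  | xJ u => simp [wD, Finsupp.single_apply] at hw <;> (try split_ifs at hw) <;> omega
  | xJc u => simp [wD, Finsupp.single_apply] at hw <;> (try split_ifs at hw) <;> omega
  | xP s u hsu => simp [wD, Finsupp.single_apply] at hw <;> (try split_ifs at hw) <;> omega
  | y u => exact Or.inr ⟨u, hv⟩

lemma source_n {d : DVar m →₀ ℕ} (h : 0 < AD m d (2*m)) :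
    0 < d .xn ∨ ∃ t, 0 < d (.y t) := by
  classical
  obtain ⟨v, hv, hw⟩ := source m h
  cases v with
  | xn => exact Or.inl hv
  | x1 => simp [wD, Finsupp.single_apply] at hw <;> (try split_ifs at hw) <;> omega
  | xJ u => simp [wD, Finsupp.single_apply] at hw <;> (try split_ifs at hw) <;> omega
  | xJc u =>
    have := u.isLt
    simp [wD, Finsupp.single_apply] at hw <;> (try split_ifs at hw) <;> omega
  | xP s u hsu => simp [wD, Finsupp.single_apply] at hw <;> (try split_ifs at hw) <;> omega
  | y u => exact Or.inr ⟨u, hv⟩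

lemma source_even {d : DVar m →₀ ℕ} {t : Fin (m-1)} (h : 0 < AD m d (2*t.val+2)) :
    0 < d (.xJc t) := by
  classical
  obtain ⟨v, hv, hw⟩ := source m h
  cases v with
  | x1 => simp [wD, Finsupp.single_apply] at hw <;> (try split_ifs at hw) <;> omega
  | xn =>
    have := t.isLt
    simp [wD, Finsupp.single_apply] at hw <;> (try split_ifs at hw) <;> omega
  | xJ u => simp [wD, Finsupp.single_apply] at hw <;> (try split_ifs at hw) <;> omega
  | xJc u =>
    simp only [wD, Finsupp.single_apply] at hw
    split_ifs at hw with hc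
    · have : u = t := fin_ext' (by omega)
      subst this; exact hv
    · omega
  | xP s u hsu => simp [wD, Finsupp.single_apply] at hw <;> (try split_ifs at hw) <;> omega
  | y u =>
    have := t.isLt
    simp [wD, Finsupp.single_apply] at hw <;> (try split_ifs at hw) <;> omega

lemma sum_single_y_eq (u : Fin (m-1)) (k : ℕ) :
    (∑ t : Fin (m-1), (single (DVar.y u) k : DVar m →₀ ℕ) (DVar.y t)) = k := by
  classical
  rw [Finset.sum_eq_single u]
  · simp
  · intro t _ ht
    refine Finsupp.single_eq_of_ne' ?_
    intro hc
    injection hc with h1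
    exact ht h1.symm
  · intro hu; exact absurd (Finset.mem_univ u) hu

lemma sum_single_notY (v : DVar m) (k : ℕ) (hv : ∀ t, v ≠ DVar.y t) :
    (∑ t : Fin (m-1), (single v k : DVar m →₀ ℕ) (DVar.y t)) = 0 :=
  Finset.sum_eq_zero fun t _ => Finsupp.single_eq_of_ne' (hv t)

lemma coord1 (d : DVar m →₀ ℕ) :
    AD m d 1 = 2 * d DVar.x1 + ∑ t : Fin (m-1), d (DVar.y t) := by
  classical
  induction d using Finsupp.induction with
  | zero => simp
  | single_add v k rest hvr hk ih =>
    rw [AD_add, AD_single]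
    simp only [Finsupp.add_apply, Finsupp.coe_add, Pi.add_apply, Finsupp.smul_apply,
      smul_eq_mul, Finset.sum_add_distrib]
    rw [ih]
    have hkey : k * wD m v 1
        = 2 * (single v k : DVar m →₀ ℕ) DVar.x1
          + ∑ t : Fin (m-1), (single v k : DVar m →₀ ℕ) (DVar.y t) := by
      cases v with
      | x1 =>
        rw [sum_single_notY _ _ (by intro t; simp), Finsupp.single_eq_same]
        have : wD m DVar.x1 1 = 2 := by simp [wD, Finsupp.single_apply]
        rw [this]; omega
      | xn =>
        rw [sum_single_notY _ _ (by intro t; simp),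
          Finsupp.single_eq_of_ne' (by simp : DVar.xn ≠ DVar.x1)]
        have : wD m DVar.xn 1 = 0 := by
          have h2 : 2*m ≠ 1 := by omega
          simp [wD, Finsupp.single_apply, h2]
        rw [this]; omega
      | xJ u =>
        rw [sum_single_notY _ _ (by intro t; simp),
          Finsupp.single_eq_of_ne' (by simp : DVar.xJ u ≠ DVar.x1)]
        have : wD m (DVar.xJ u) 1 = 0 := by
          have h2 : 2*u.val+3 ≠ 1 := by omega
          simp [wD, Finsupp.single_apply, h2]
        rw [this]; omega
      | xJc u =>
        rw [sum_single_notY _ _ (by intro t; simp),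
          Finsupp.single_eq_of_ne' (by simp : DVar.xJc u ≠ DVar.x1)]
        have : wD m (DVar.xJc u) 1 = 0 := by
          have h2 : 2*u.val+2 ≠ 1 := by omega
          simp [wD, Finsupp.single_apply, h2]
        rw [this]; omega
      | xP s u hsu =>
        rw [sum_single_notY _ _ (by intro t; simp),
          Finsupp.single_eq_of_ne' (by simp : DVar.xP s u hsu ≠ DVar.x1)]
        have : wD m (DVar.xP s u hsu) 1 = 0 := by
          have h2 : 2*s.val+3 ≠ 1 := by omega
          have h3 : 2*u.val+3 ≠ 1 := by omega
          simp [wD, Finsupp.single_apply, h2, h3]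
        rw [this]; omega
      | y u =>
        rw [sum_single_y_eq, Finsupp.single_eq_of_ne' (by simp : DVar.y u ≠ DVar.x1)]
        have : wD m (DVar.y u) 1 = 1 := by
          have h2 : 2*u.val+3 ≠ 1 := by omega
          have h3 : 2*m ≠ 1 := by omega
          simp [wD, Finsupp.add_apply, Finsupp.single_apply, h2, h3]
        rw [this]; omega
    omega

lemma coordn (d : DVar m →₀ ℕ) :
    AD m d (2*m) = 2 * d DVar.xn + ∑ t : Fin (m-1), d (DVar.y t) := by
  classical
  induction d using Finsupp.induction with
  | zero => simp
  | single_add v k rest hvr hk ih =>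
    rw [AD_add, AD_single]
    simp only [Finsupp.add_apply, Finsupp.coe_add, Pi.add_apply, Finsupp.smul_apply,
      smul_eq_mul, Finset.sum_add_distrib]
    rw [ih]
    have hkey : k * wD m v (2*m)
        = 2 * (single v k : DVar m →₀ ℕ) DVar.xn
          + ∑ t : Fin (m-1), (single v k : DVar m →₀ ℕ) (DVar.y t) := by
      cases v with
      | xn =>
        rw [sum_single_notY _ _ (by intro t; simp), Finsupp.single_eq_same]
        have : wD m DVar.xn (2*m) = 2 := by simp [wD, Finsupp.single_apply]
        rw [this]; omega
      | x1 =>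
        rw [sum_single_notY _ _ (by intro t; simp),
          Finsupp.single_eq_of_ne' (by simp : DVar.x1 ≠ DVar.xn)]
        have : wD m DVar.x1 (2*m) = 0 := by
          have h2 : 1 ≠ 2*m := by omega
          simp [wD, Finsupp.single_apply, h2]
        rw [this]; omega
      | xJ u =>
        rw [sum_single_notY _ _ (by intro t; simp),
          Finsupp.single_eq_of_ne' (by simp : DVar.xJ u ≠ DVar.xn)]
        have : wD m (DVar.xJ u) (2*m) = 0 := by
          have h2 : 2*u.val+3 ≠ 2*m := by omega
          simp [wD, Finsupp.single_apply, h2]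
        rw [this]; omega
      | xJc u =>
        rw [sum_single_notY _ _ (by intro t; simp),
          Finsupp.single_eq_of_ne' (by simp : DVar.xJc u ≠ DVar.xn)]
        have : wD m (DVar.xJc u) (2*m) = 0 := by
          have hu := u.isLt
          have h2 : 2*u.val+2 ≠ 2*m := by omega
          simp [wD, Finsupp.single_apply, h2]
        rw [this]; omega
      | xP s u hsu =>
        rw [sum_single_notY _ _ (by intro t; simp),
          Finsupp.single_eq_of_ne' (by simp : DVar.xP s u hsu ≠ DVar.xn)]
        have : wD m (DVar.xP s u hsu) (2*m) = 0 := by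
          have h2 : 2*s.val+3 ≠ 2*m := by omega
          have h3 : 2*u.val+3 ≠ 2*m := by omega
          simp [wD, Finsupp.single_apply, h2, h3]
        rw [this]; omega
      | y u =>
        rw [sum_single_y_eq, Finsupp.single_eq_of_ne' (by simp : DVar.y u ≠ DVar.xn)]
        have : wD m (DVar.y u) (2*m) = 1 := by
          have h2 : 2*u.val+3 ≠ 2*m := by omega
          have h3 : 1 ≠ 2*m := by omega
          simp [wD, Finsupp.add_apply, Finsupp.single_apply, h2, h3]
        rw [this]; omega
    omega

lemma coord_odd_y (d : DVar m →₀ ℕ) (t : Fin (m-1))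
    (hP : ∀ s u (h : s < u), d (DVar.xP s u h) = 0) (hJ : ∀ u, d (DVar.xJ u) = 0) :
    AD m d (2*t.val+3) = d (DVar.y t) := by
  classical
  induction d using Finsupp.induction with
  | zero => simp
  | single_add v k rest hvr hk ih =>
    have hP' : ∀ s u (h : s < u), rest (DVar.xP s u h) = 0 := by
      intro s u h; have := hP s u h
      simp only [Finsupp.coe_add, Pi.add_apply] at this; omega
    have hJ' : ∀ u, rest (DVar.xJ u) = 0 := by
      intro u; have := hJ u
      simp only [Finsupp.coe_add, Pi.add_apply] at this; omega
    rw [AD_add, AD_single]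
    simp only [Finsupp.add_apply, Finsupp.coe_add, Pi.add_apply, Finsupp.smul_apply,
      smul_eq_mul]
    rw [ih hP' hJ']
    have hkey : k * wD m v (2*t.val+3) = (single v k : DVar m →₀ ℕ) (DVar.y t) := by
      cases v with
      | x1 =>
        rw [Finsupp.single_eq_of_ne' (by simp : DVar.x1 ≠ DVar.y t)]
        have : wD m DVar.x1 (2*t.val+3) = 0 := by
          have h2 : (1:ℕ) ≠ 2*t.val+3 := by omega
          simp [wD, Finsupp.single_apply, h2]
        rw [this]; omega
      | xn =>
        rw [Finsupp.single_eq_of_ne' (by simp : DVar.xn ≠ DVar.y t)]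
        have : wD m DVar.xn (2*t.val+3) = 0 := by
          have h2 : 2*m ≠ 2*t.val+3 := by omega
          simp [wD, Finsupp.single_apply, h2]
        rw [this]; omega
      | xJc u =>
        rw [Finsupp.single_eq_of_ne' (by simp : DVar.xJc u ≠ DVar.y t)]
        have : wD m (DVar.xJc u) (2*t.val+3) = 0 := by
          have h2 : 2*u.val+2 ≠ 2*t.val+3 := by omega
          simp [wD, Finsupp.single_apply, h2]
          omega
        rw [this]; omega
      | xJ u =>
        exfalso
        have := hJ u
        simp only [Finsupp.coe_add, Pi.add_apply, Finsupp.single_eq_same] at this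
        omega
      | xP s u hsu =>
        exfalso
        have := hP s u hsu
        simp only [Finsupp.coe_add, Pi.add_apply, Finsupp.single_eq_same] at this
        omega
      | y u =>
        by_cases hu : u = t
        · subst hu
          rw [Finsupp.single_eq_same]
          have : wD m (DVar.y u) (2*u.val+3) = 1 := by
            have h2 : (1:ℕ) ≠ 2*u.val+3 := by omega
            have h3 : 2*m ≠ 2*u.val+3 := by omega
            simp [wD, Finsupp.add_apply, Finsupp.single_apply, h2, h3]
          rw [this]; omega
        · rw [Finsupp.single_eq_of_ne' (by simp [hu] : DVar.y u ≠ DVar.y t)]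
          have : wD m (DVar.y u) (2*t.val+3) = 0 := by
            have h1 : 2*u.val+3 ≠ 2*t.val+3 := by
              intro hc; exact hu (fin_ext' (by omega))
            have h2 : (1:ℕ) ≠ 2*t.val+3 := by omega
            have h3 : 2*m ≠ 2*t.val+3 := by omega
            simp [wD, Finsupp.add_apply, Finsupp.single_apply, h1, h2, h3]
            exact fun hc => hu (Fin.ext hc)
          rw [this]; omega
    omega

lemma y_le_coord_odd (d : DVar m →₀ ℕ) (t : Fin (m-1)) :
    d (DVar.y t) ≤ AD m d (2*t.val+3) := by
  have h := term_le m d (DVar.y t) (2*t.val+3)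
  have hw : wD m (DVar.y t) (2*t.val+3) = 1 := by
    have h2 : (1:ℕ) ≠ 2*t.val+3 := by omega
    have h3 : 2*m ≠ 2*t.val+3 := by omega
    simp [wD, Finsupp.add_apply, Finsupp.single_apply, h2, h3]
  rw [hw] at h; omega

lemma xP_le_coord_left (d : DVar m →₀ ℕ) (s u : Fin (m-1)) (h : s < u) :
    d (DVar.xP s u h) ≤ AD m d (2*s.val+3) := by
  have hl := term_le m d (DVar.xP s u h) (2*s.val+3)
  have hsu : s.val < u.val := h
  have hw : wD m (DVar.xP s u h) (2*s.val+3) = 1 := by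
    have h2 : 2*u.val+3 ≠ 2*s.val+3 := by omega
    simp [wD, Finsupp.add_apply, Finsupp.single_apply, h2]
    omega
  rw [hw] at hl; omega

lemma xP_le_coord_right (d : DVar m →₀ ℕ) (s u : Fin (m-1)) (h : s < u) :
    d (DVar.xP s u h) ≤ AD m d (2*u.val+3) := by
  have hl := term_le m d (DVar.xP s u h) (2*u.val+3)
  have hsu : s.val < u.val := h
  have hw : wD m (DVar.xP s u h) (2*u.val+3) = 1 := by
    have h2 : 2*s.val+3 ≠ 2*u.val+3 := by omega
    simp [wD, Finsupp.add_apply, Finsupp.single_apply, h2]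
    omega
  rw [hw] at hl; omega

lemma xJ_le_coord (d : DVar m →₀ ℕ) (t : Fin (m-1)) :
    d (DVar.xJ t) ≤ AD m d (2*t.val+3) := by
  have hl := term_le m d (DVar.xJ t) (2*t.val+3)
  have hw : wD m (DVar.xJ t) (2*t.val+3) = 2 := by
    simp [wD, Finsupp.single_apply]
  rw [hw] at hl; omega

lemma wD_deg_pos (v : DVar m) : ∃ c, 0 < wD m v c := by
  cases v with
  | x1 => exact ⟨1, by simp [wD, Finsupp.single_apply]⟩
  | xn => exact ⟨2*m, by simp [wD, Finsupp.single_apply]⟩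
  | xJ u => exact ⟨2*u.val+3, by simp [wD, Finsupp.single_apply]⟩
  | xJc u => exact ⟨2*u.val+2, by simp [wD, Finsupp.single_apply]⟩
  | xP s u hsu =>
    refine ⟨2*s.val+3, ?_⟩
    have h2 : 2*u.val+3 ≠ 2*s.val+3 := by
      have : s.val < u.val := hsu; omega
    simp [wD, Finsupp.add_apply, Finsupp.single_apply, h2]
  | y u =>
    refine ⟨1, ?_⟩
    have h2 : 2*u.val+3 ≠ 1 := by omega
    simp [wD, Finsupp.add_apply, Finsupp.single_apply, h2]

lemma AD_eq_zero {d : DVar m →₀ ℕ} (h : AD m d = 0) : d = 0 := by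
  classical
  ext v
  obtain ⟨c, hc⟩ := wD_deg_pos v
  have h2 := term_le m d v c
  rw [h] at h2
  simp only [Finsupp.coe_zero, Pi.zero_apply] at h2 ⊢
  exact by nlinarith [h2, hc]

lemma degE_le_degE_AD (d : DVar m →₀ ℕ) : degE d ≤ degE (AD m d) := by
  classical
  induction d using Finsupp.induction with
  | zero => simp
  | single_add v k rest hvr hk ih =>
    rw [degE_add, AD_add, degE_add, degE_single]
    have hb : k ≤ degE (AD m (single v k)) := by
      obtain ⟨c, hc⟩ := wD_deg_pos v
      have h1 : k ≤ AD m (single v k) c := by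
        rw [AD_single]
        simp only [Finsupp.smul_apply, smul_eq_mul]
        nlinarith
      exact le_trans h1 (coord_le_degE _ _)
    omega

end DW
namespace DW
open MvPolynomial Finsupp DVar

variable {m : ℕ}

lemma rk_xP_le (s u : Fin (m-1)) (h : s < u) :
    rankD m (DVar.xP s u h) ≤ 2*(m*m) + m := by
  have hs := s.isLt
  have hu := u.isLt
  have h1 : (u.val+2) * (2*m) ≤ m * (2*m) := Nat.mul_le_mul_right _ (by omega)
  have h2 : (u.val+2) * (2*m) = u.val * (2*m) + 4*m := by ring
  have h3 : m * (2*m) = 2*(m*m) := by ring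
  simp only [rankD]
  omega

lemma rk_lt_y (v : DVar m) (t : Fin (m-1)) (hv : ∀ u : Fin (m-1), v = DVar.y u → u < t) :
    rankD m v < rankD m (DVar.y t) := by
  have ht := t.isLt
  cases v with
  | x1 => simp only [rankD]; omega
  | xn => simp only [rankD]; omega
  | xJ u => have := u.isLt; simp only [rankD]; omega
  | xJc u => have := u.isLt; simp only [rankD]; omega
  | xP s u h =>
    have := rk_xP_le s u h
    have hr : 10 * m * m = 10 * (m*m) := by ring
    simp only [rankD] at *; omega
  | y u =>
    have : u < t := hv u rfl
    have : u.val < t.val := this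
    simp only [rankD]; omega

lemma rk_xJ_lt_xP (t : Fin (m-1)) (s u : Fin (m-1)) (h : s < u) :
    rankD m (DVar.xJ t) < rankD m (DVar.xP s u h) := by
  have := t.isLt
  have h0 : 0 ≤ u.val * (2*m) := Nat.zero_le _
  simp only [rankD]; omega

lemma rk_x1_lt_xP (s u : Fin (m-1)) (h : s < u) :
    rankD m DVar.x1 < rankD m (DVar.xP s u h) := by
  have := u.isLt
  have h0 : 0 ≤ u.val * (2*m) := Nat.zero_le _
  simp only [rankD]; omega

lemma rk_xn_lt_xP (s u : Fin (m-1)) (h : s < u) :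
    rankD m DVar.xn < rankD m (DVar.xP s u h) := by
  have := u.isLt
  have h0 : 0 ≤ u.val * (2*m) := Nat.zero_le _
  simp only [rankD]; omega

lemma rk_xP_lt_xP_right (s u s' u' : Fin (m-1)) (h : s < u) (h' : s' < u') (huu : u < u') :
    rankD m (DVar.xP s u h) < rankD m (DVar.xP s' u' h') := by
  have hs := s.isLt
  have hm1 : s.val < 2*m := by omega
  have h1 : (u.val+1) * (2*m) ≤ u'.val * (2*m) := Nat.mul_le_mul_right _ (by exact huu)
  have h2 : (u.val+1) * (2*m) = u.val * (2*m) + 2*m := by ring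
  simp only [rankD]; omega

lemma rk_xP_lt_xP_left (s s' u : Fin (m-1)) (h : s < u) (h' : s' < u) (hss : s < s') :
    rankD m (DVar.xP s u h) < rankD m (DVar.xP s' u h') := by
  have : s.val < s'.val := hss
  simp only [rankD]; omega

lemma rank_inj (v w : DVar m) (h : rankD m v = rankD m w) : v = w := by
  have hxp_le : ∀ (s u : Fin (m-1)) (hsu : s < u), rankD m (DVar.xP s u hsu) ≤ 2*(m*m)+m :=
    rk_xP_le
  cases v with
  | x1 =>
    cases w with
    | x1 => rfl
    | xn => simp only [rankD] at h; omega
    | xJ u => have := u.isLt; simp only [rankD] at h; omega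
    | xJc u => have := u.isLt; simp only [rankD] at h; omega
    | xP s u hsu =>
      have := u.isLt
      have h0 : 0 ≤ u.val * (2*m) := Nat.zero_le _
      simp only [rankD] at h; omega
    | y u => have := u.isLt; simp only [rankD] at h; omega
  | xn =>
    cases w with
    | xn => rfl
    | x1 => simp only [rankD] at h; omega
    | xJ u => have := u.isLt; simp only [rankD] at h; omega
    | xJc u => have := u.isLt; simp only [rankD] at h; omega
    | xP s u hsu =>
      have := u.isLt
      have h0 : 0 ≤ u.val * (2*m) := Nat.zero_le _
      simp only [rankD] at h; omega
    | y u => have := u.isLt; simp only [rankD] at h; omega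
  | xJ t =>
    have ht := t.isLt
    cases w with
    | x1 => simp only [rankD] at h; omega
    | xn => simp only [rankD] at h; omega
    | xJ u => have : t = u := fin_ext' (by simp only [rankD] at h; omega); rw [this]
    | xJc u => have := u.isLt; simp only [rankD] at h; omega
    | xP s u hsu =>
      have := u.isLt
      have h0 : 0 ≤ u.val * (2*m) := Nat.zero_le _
      simp only [rankD] at h; omega
    | y u => have := u.isLt; simp only [rankD] at h; omega
  | xJc t =>
    have ht := t.isLt
    cases w with
    | x1 => simp only [rankD] at h; omega
    | xn => simp only [rankD] at h; omega
    | xJc u => have : t = u := fin_ext' (by simp only [rankD] at h; omega); rw [this]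
    | xJ u => have := u.isLt; simp only [rankD] at h; omega
    | xP s u hsu =>
      have := u.isLt
      have h0 : 0 ≤ u.val * (2*m) := Nat.zero_le _
      simp only [rankD] at h; omega
    | y u => have := u.isLt; simp only [rankD] at h; omega
  | xP s u hsu =>
    have hle := hxp_le s u hsu
    have hu := u.isLt
    have h0 : 0 ≤ u.val * (2*m) := Nat.zero_le _
    cases w with
    | x1 => simp only [rankD] at h ⊢; omega
    | xn => simp only [rankD] at h ⊢; omega
    | xJ t => have := t.isLt; simp only [rankD] at h ⊢; omega
    | xJc t => have := t.isLt; simp only [rankD] at h ⊢; omega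
    | y t =>
      have := t.isLt
      have hr : 10 * m * m = 10 * (m*m) := by ring
      simp only [rankD] at h hle ⊢; omega
    | xP s' u' hsu' =>
      have hs := s.isLt
      have hs' := s'.isLt
      have hmm : 2 ≤ m := by omega
      have huu : u = u' := by
        by_contra hne
        rcases lt_or_gt_of_ne hne with hlt | hgt
        · have := rk_xP_lt_xP_right s u s' u' hsu hsu' hlt
          omega
        · have := rk_xP_lt_xP_right s' u' s u hsu' hsu hgt
          omega
      subst huu
      have hss : s = s' := by
        by_contra hne
        rcases lt_or_gt_of_ne hne with hlt | hgt
        · have := rk_xP_lt_xP_left s s' u hsu hsu' hlt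
          omega
        · have := rk_xP_lt_xP_left s' s u hsu' hsu hgt
          omega
      subst hss
      rfl
  | y t =>
    have ht := t.isLt
    cases w with
    | x1 => simp only [rankD] at h; omega
    | xn => simp only [rankD] at h; omega
    | xJ u => have := u.isLt; simp only [rankD] at h; omega
    | xJc u => have := u.isLt; simp only [rankD] at h; omega
    | xP s u hsu =>
      have hle := hxp_le s u hsu
      have := u.isLt
      have hr : 10 * m * m = 10 * (m*m) := by ring
      simp only [rankD] at h hle; omega
    | y u => have : t = u := fin_ext' (by simp only [rankD] at h; omega); rw [this]

/-- strict rank bound -/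
def RB (m : ℕ) : ℕ := 10*(m*m) + 11*m

lemma rank_lt_RB (hm : 2 ≤ m) (v : DVar m) : rankD m v < RB m := by
  cases v with
  | x1 => simp only [rankD, RB]; omega
  | xn => simp only [rankD, RB]; omega
  | xJ u => have := u.isLt; simp only [rankD, RB]; omega
  | xJc u => have := u.isLt; simp only [rankD, RB]; omega
  | xP s u h =>
    have := rk_xP_le s u h
    have hr : 10 * m * m = 10 * (m*m) := by ring
    simp only [rankD, RB] at *; omega
  | y u =>
    have := u.isLt
    have hr : 10 * m * m = 10 * (m*m) := by ring
    simp only [rankD, RB]; omega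

lemma prec_add_left {r : DVar m → ℕ} {a b : DVar m →₀ ℕ} (c : DVar m →₀ ℕ)
    (h : degRevLexLT r a b) : degRevLexLT r (c + a) (c + b) := by
  have hda : degE (c + a) = degE c + degE a := degE_add c a
  have hdb : degE (c + b) = degE c + degE b := degE_add c b
  rcases h with h | ⟨hdeg, v, hv, hw⟩
  · left
    show degE (c+a) < degE (c+b)
    rw [hda, hdb]; exact Nat.add_lt_add_left h _
  · right
    constructor
    · show degE (c+a) = degE (c+b)
      have h' : degE a = degE b := hdeg
      rw [hda, hdb, h']
    · refine ⟨v, ?_, ?_⟩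
      · simp only [Finsupp.coe_add, Pi.add_apply]; omega
      · intro w hrw
        simp only [Finsupp.coe_add, Pi.add_apply]
        rw [hw w hrw]

lemma prec_deg_le {r : DVar m → ℕ} {a b : DVar m →₀ ℕ} (h : degRevLexLT r a b) :
    degE a ≤ degE b := by
  rcases h with h | ⟨hdeg, _⟩
  · exact le_of_lt h
  · exact le_of_eq hdeg

/-- digit sum bound -/
lemma dsum_lt (B : ℕ) (hB : 2 ≤ B) :
    ∀ (R : ℕ) (s : Finset (DVar m)) (f : DVar m → ℕ),
      (∀ v ∈ s, f v < B) → (∀ v ∈ s, rankD m v < R) →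
      (∑ v ∈ s, f v * B^(rankD m v)) < B^R := by
  classical
  have geo : ∀ R : ℕ, (B-1) * (∑ r ∈ Finset.range R, B^r) + 1 = B^R := by
    intro R
    induction R with
    | zero => simp
    | succ R ih =>
      rw [Finset.sum_range_succ, Nat.mul_add, pow_succ]
      have h1 : (B-1) * B^R = B * B^R - B^R := by
        rw [Nat.sub_one_mul]
      have h2 : B^R ≤ B * B^R := Nat.le_mul_of_pos_left _ (by omega)
      have h3 : B * B^R = B^R * B := Nat.mul_comm _ _
      omega
  intro R s f hf hr
  have hsub : Finset.image (rankD m) s ⊆ Finset.range R := by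
    intro r hrr
    simp only [Finset.mem_image] at hrr
    obtain ⟨v, hv, rfl⟩ := hrr
    exact Finset.mem_range.mpr (hr v hv)
  have h1 : (∑ v ∈ s, f v * B^(rankD m v)) ≤ ∑ v ∈ s, (B-1) * B^(rankD m v) := by
    apply Finset.sum_le_sum
    intro v hv
    exact Nat.mul_le_mul_right _ (by have := hf v hv; omega)
  have h2 : (∑ v ∈ s, (B-1) * B^(rankD m v)) = ∑ r ∈ Finset.image (rankD m) s, (B-1) * B^r := by
    rw [Finset.sum_image]
    intro v hv w hw hvw
    exact rank_inj v w hvw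
  have h3 : (∑ r ∈ Finset.image (rankD m) s, (B-1) * B^r) ≤ ∑ r ∈ Finset.range R, (B-1)*B^r := by
    apply Finset.sum_le_sum_of_subset hsub
  have h4 : (∑ r ∈ Finset.range R, (B-1)*B^r) = (B-1) * ∑ r ∈ Finset.range R, B^r := by
    rw [Finset.mul_sum]
  have := geo R
  omega

/-- the positional value of an exponent vector -/
noncomputable def PsiP (m D : ℕ) (d : DVar m →₀ ℕ) : ℕ :=
  d.sum fun v k => k * (D+2)^(rankD m v)

/-- the measure realising `degRevLexLT` on vectors of `degE ≤ D` -/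
noncomputable def PhiM (m D : ℕ) (d : DVar m →₀ ℕ) : ℕ :=
  degE d * (D * (D+2)^(RB m) + (D+2)^(RB m) + 1)
    + (degE d * (D+2)^(RB m) - PsiP m D d)

lemma psi_le (hm : 2 ≤ m) (D : ℕ) (d : DVar m →₀ ℕ) :
    PsiP m D d ≤ degE d * (D+2)^(RB m) := by
  classical
  rw [PsiP, Finsupp.sum]
  have h1 : ∀ v ∈ d.support, d v * (D+2)^(rankD m v) ≤ d v * (D+2)^(RB m) := by
    intro v hv
    exact Nat.mul_le_mul_left _ (Nat.pow_le_pow_right (by omega) (le_of_lt (rank_lt_RB hm v)))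
  calc (∑ v ∈ d.support, d v * (D+2)^(rankD m v))
      ≤ ∑ v ∈ d.support, d v * (D+2)^(RB m) := Finset.sum_le_sum h1
    _ = (∑ v ∈ d.support, d v) * (D+2)^(RB m) := by rw [Finset.sum_mul]
    _ = degE d * (D+2)^(RB m) := by rw [degE, Finsupp.sum]

lemma psi_sum_over (D : ℕ) (d : DVar m →₀ ℕ) (s : Finset (DVar m)) (hs : d.support ⊆ s) :
    PsiP m D d = ∑ v ∈ s, d v * (D+2)^(rankD m v) := by
  classical
  rw [PsiP]
  exact Finsupp.sum_of_support_subset d hs _ (by intro v _; simp)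

lemma psi_lt_of_witness (hm : 2 ≤ m) (D : ℕ) {a b : DVar m →₀ ℕ} (v : DVar m)
    (hv : b v < a v) (hw : ∀ w, rankD m v < rankD m w → a w = b w)
    (hda : degE a ≤ D) (hdb : degE b ≤ D) :
    PsiP m D b < PsiP m D a := by
  classical
  set s := a.support ∪ b.support with hsdef
  have hva : v ∈ s := by
    apply Finset.mem_union_left
    rw [Finsupp.mem_support_iff]
    omega
  rw [psi_sum_over D a s Finset.subset_union_left,
      psi_sum_over D b s Finset.subset_union_right]
  rw [← Finset.sum_filter_add_sum_filter_not s (fun w => rankD m v < rankD m w)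
        (fun w => a w * (D+2)^(rankD m w)),
      ← Finset.sum_filter_add_sum_filter_not s (fun w => rankD m v < rankD m w)
        (fun w => b w * (D+2)^(rankD m w))]
  have hhigh : (∑ w ∈ s.filter (fun w => rankD m v < rankD m w), a w * (D+2)^(rankD m w))
      = ∑ w ∈ s.filter (fun w => rankD m v < rankD m w), b w * (D+2)^(rankD m w) := by
    apply Finset.sum_congr rfl
    intro w hwmem
    rw [hw w (Finset.mem_filter.mp hwmem).2]
  rw [hhigh]
  have hlow : (∑ w ∈ s.filter (fun w => ¬ rankD m v < rankD m w), b w * (D+2)^(rankD m w))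
      < ∑ w ∈ s.filter (fun w => ¬ rankD m v < rankD m w), a w * (D+2)^(rankD m w) := by
    set T := s.filter (fun w => ¬ rankD m v < rankD m w) with hT
    have hvT : v ∈ T := by
      rw [hT, Finset.mem_filter]
      exact ⟨hva, by omega⟩
    rw [← Finset.add_sum_erase T _ hvT, ← Finset.add_sum_erase T (fun w => a w * (D+2)^(rankD m w)) hvT]
    have herase : (∑ w ∈ T.erase v, b w * (D+2)^(rankD m w)) < (D+2)^(rankD m v) := by
      apply dsum_lt (D+2) (by omega)
      · intro w hwmem
        have := coord_le_degE b w
        omega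
      · intro w hwmem
        have h1 := Finset.mem_of_mem_erase hwmem
        have h2 := Finset.ne_of_mem_erase hwmem
        rw [hT, Finset.mem_filter] at h1
        have h3 : rankD m w ≤ rankD m v := by omega
        rcases lt_or_eq_of_le h3 with h4 | h4
        · exact h4
        · exact absurd (rank_inj w v h4) h2
    have haside : a v * (D+2)^(rankD m v) ≥ (b v + 1) * (D+2)^(rankD m v) :=
      Nat.mul_le_mul_right _ (by omega)
    have hbig : (b v + 1) * (D+2)^(rankD m v) = b v * (D+2)^(rankD m v) + (D+2)^(rankD m v) := by ring
    have hrest : (∑ w ∈ T.erase v, a w * (D+2)^(rankD m w)) ≥ 0 := Nat.zero_le _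
    omega
  omega

lemma prec_phi (hm : 2 ≤ m) (D : ℕ) {a b : DVar m →₀ ℕ}
    (h : degRevLexLT (rankD m) a b) (hda : degE a ≤ D) (hdb : degE b ≤ D) :
    PhiM m D a < PhiM m D b := by
  classical
  rcases h with hlt | ⟨hdeg, v, hv, hw⟩
  · have hd : degE a < degE b := hlt
    have hsub : degE a * (D+2)^(RB m) - PsiP m D a ≤ degE a * (D+2)^(RB m) := Nat.sub_le _ _
    have h2 : degE a * (D+2)^(RB m) ≤ D * (D+2)^(RB m) := Nat.mul_le_mul_right _ hda
    have h3 : (degE a + 1) * (D * (D+2)^(RB m) + (D+2)^(RB m) + 1)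
        ≤ degE b * (D * (D+2)^(RB m) + (D+2)^(RB m) + 1) :=
      Nat.mul_le_mul_right _ (by omega)
    have h4 : (degE a + 1) * (D * (D+2)^(RB m) + (D+2)^(RB m) + 1)
        = degE a * (D * (D+2)^(RB m) + (D+2)^(RB m) + 1)
          + (D * (D+2)^(RB m) + (D+2)^(RB m) + 1) := by ring
    rw [PhiM, PhiM]
    omega
  · have hd : degE a = degE b := hdeg
    have hpsi : PsiP m D b < PsiP m D a := psi_lt_of_witness hm D v hv hw hda hdb
    have hle : PsiP m D a ≤ degE a * (D+2)^(RB m) := psi_le hm D a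
    rw [PhiM, PhiM, ← hd]
    omega

end DW
namespace DW
open MvPolynomial Finsupp DVar

variable {m : ℕ}

noncomputable def g2 (a b : DVar m) : DVar m →₀ ℕ := single a 1 + single b 1
noncomputable def g3 (a b c : DVar m) : DVar m →₀ ℕ := single a 1 + single b 1 + single c 1

lemma degE_g2 (a b : DVar m) : degE (g2 a b) = 2 := by
  rw [g2, degE_add, degE_single, degE_single]

lemma degE_g3 (a b c : DVar m) : degE (g3 a b c) = 3 := by
  rw [g3, degE_add, degE_add, degE_single, degE_single, degE_single]

lemma g2_eval_zero (a b w : DVar m) (ha : a ≠ w) (hb : b ≠ w) : g2 a b w = 0 := by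
  rw [g2]
  simp only [Finsupp.coe_add, Pi.add_apply,
    Finsupp.single_eq_of_ne' ha, Finsupp.single_eq_of_ne' hb, add_zero]

lemma g2_eval_left (a b : DVar m) (hab : b ≠ a) : g2 a b a = 1 := by
  rw [g2]
  simp only [Finsupp.coe_add, Pi.add_apply, Finsupp.single_eq_same,
    Finsupp.single_eq_of_ne' hab, add_zero, zero_add]

lemma g2_eval_right (a b : DVar m) (hab : a ≠ b) : g2 a b b = 1 := by
  rw [g2]
  simp only [Finsupp.coe_add, Pi.add_apply, Finsupp.single_eq_same,
    Finsupp.single_eq_of_ne' hab, add_zero, zero_add]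

lemma g3_eval_zero (a b c w : DVar m) (ha : a ≠ w) (hb : b ≠ w) (hc : c ≠ w) :
    g3 a b c w = 0 := by
  rw [g3]
  simp only [Finsupp.coe_add, Pi.add_apply, Finsupp.single_eq_of_ne' ha,
    Finsupp.single_eq_of_ne' hb, Finsupp.single_eq_of_ne' hc, add_zero]

lemma single2_eval_zero (v w : DVar m) (h : v ≠ w) : (single v 2 : DVar m →₀ ℕ) w = 0 :=
  Finsupp.single_eq_of_ne' h

lemma xP_ne {s t s' t' : Fin (m-1)} {h : s < t} {h' : s' < t'} (hne : s ≠ s' ∨ t ≠ t') :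
    DVar.xP s t h ≠ DVar.xP s' t' h' := by
  intro hc
  injection hc with h1 h2
  rcases hne with hne | hne
  · exact hne h1
  · exact hne h2

lemma y_ne {i j : Fin (m-1)} (h : i ≠ j) : DVar.y i ≠ DVar.y j := by
  intro hc; injection hc with h1; exact h h1

lemma xJ_ne {i j : Fin (m-1)} (h : i ≠ j) : DVar.xJ i ≠ DVar.xJ j := by
  intro hc; injection hc with h1; exact h h1

lemma ne_of_rank_le {x v w : DVar m} (hxv : rankD m x ≤ rankD m v)
    (hvw : rankD m v < rankD m w) : x ≠ w := by
  intro h; subst h; omega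

/-- the pairs (leading exponent, trailing exponent) of the binomials of `𝒢` -/
def IsGen (m : ℕ) (g g' : DVar m →₀ ℕ) : Prop :=
  (∃ (i j k l : Fin (m-1)) (hij : i < j) (hjk : j < k) (hkl : k < l),
    (g = g2 (DVar.xP i k (hij.trans hjk)) (DVar.xP j l (hjk.trans hkl)) ∧
       g' = g2 (DVar.xP i j hij) (DVar.xP k l hkl)) ∨
    (g = g2 (DVar.xP i l ((hij.trans hjk).trans hkl)) (DVar.xP j k hjk) ∧
       g' = g2 (DVar.xP i j hij) (DVar.xP k l hkl))) ∨
  (∃ (i j k : Fin (m-1)) (hij : i < j) (hjk : j < k),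
    (g = g2 (DVar.xP i j hij) (DVar.xP i k (hij.trans hjk)) ∧
       g' = g2 (DVar.xJ i) (DVar.xP j k hjk)) ∨
    (g = g2 (DVar.xJ j) (DVar.xP i k (hij.trans hjk)) ∧
       g' = g2 (DVar.xP i j hij) (DVar.xP j k hjk)) ∨
    (g = g2 (DVar.xJ k) (DVar.xP i j hij) ∧
       g' = g2 (DVar.xP i k (hij.trans hjk)) (DVar.xP j k hjk)) ∨
    (g = g2 (DVar.xP j k hjk) (DVar.y i) ∧
       g' = g2 (DVar.xP i j hij) (DVar.y k)) ∨
    (g = g2 (DVar.xP i k (hij.trans hjk)) (DVar.y j) ∧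
       g' = g2 (DVar.xP i j hij) (DVar.y k))) ∨
  (∃ (i j : Fin (m-1)) (hij : i < j),
    (g = g2 (DVar.xJ i) (DVar.xJ j) ∧ g' = single (DVar.xP i j hij) 2) ∨
    (g = g2 (DVar.xJ j) (DVar.y i) ∧ g' = g2 (DVar.xP i j hij) (DVar.y j)) ∨
    (g = g2 (DVar.xP i j hij) (DVar.y i) ∧ g' = g2 (DVar.xJ i) (DVar.y j)) ∨
    (g = g3 (DVar.xP i j hij) DVar.x1 DVar.xn ∧ g' = g2 (DVar.y i) (DVar.y j))) ∨
  (∃ i : Fin (m-1), g = g3 (DVar.xJ i) DVar.x1 DVar.xn ∧ g' = single (DVar.y i) 2)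

lemma AD_g2 (a b : DVar m) : AD m (g2 a b) = wD m a + wD m b := by
  rw [g2, AD_add, AD_single, AD_single, one_smul, one_smul]

lemma AD_g3 (a b c : DVar m) : AD m (g3 a b c) = wD m a + wD m b + wD m c := by
  rw [g3, AD_add, AD_add, AD_single, AD_single, AD_single, one_smul, one_smul, one_smul]

lemma AD_single2 (v : DVar m) : AD m (single v 2) = wD m v + wD m v := by
  rw [AD_single, two_smul]

lemma single_two (c : ℕ) : (single c 2 : ℕ →₀ ℕ) = single c 1 + single c 1 := by
  rw [← Finsupp.single_add]

lemma gen_arel {g g' : DVar m →₀ ℕ} (h : IsGen m g g') : AD m g = AD m g' := by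
  rcases h with ⟨i,j,k,l,hij,hjk,hkl, ⟨hg,hg'⟩ | ⟨hg,hg'⟩⟩ |
    ⟨i,j,k,hij,hjk, ⟨hg,hg'⟩ | ⟨hg,hg'⟩ | ⟨hg,hg'⟩ | ⟨hg,hg'⟩ | ⟨hg,hg'⟩⟩ |
    ⟨i,j,hij, ⟨hg,hg'⟩ | ⟨hg,hg'⟩ | ⟨hg,hg'⟩ | ⟨hg,hg'⟩⟩ |
    ⟨i, hg, hg'⟩ <;>
  subst hg <;> subst hg' <;>
  simp only [AD_g2, AD_g3, AD_single2, wD, single_two] <;> abel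

end DW
namespace DW
open MvPolynomial Finsupp DVar

variable {m : ℕ}

lemma revlex_of (g g' : DVar m →₀ ℕ) (v : DVar m) (hdeg : degE g' = degE g)
    (hv : g v < g' v) (hw : ∀ w, rankD m v < rankD m w → g' w = g w) :
    degRevLexLT (rankD m) g' g := Or.inr ⟨hdeg, v, hv, hw⟩

lemma gen_prec {g g' : DVar m →₀ ℕ} (h : IsGen m g g') :
    degRevLexLT (rankD m) g' g := by
  rcases h with ⟨i,j,k,l,hij,hjk,hkl, ⟨hg,hg'⟩ | ⟨hg,hg'⟩⟩ |
    ⟨i,j,k,hij,hjk, ⟨hg,hg'⟩ | ⟨hg,hg'⟩ | ⟨hg,hg'⟩ | ⟨hg,hg'⟩ | ⟨hg,hg'⟩⟩ |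
    ⟨i,j,hij, ⟨hg,hg'⟩ | ⟨hg,hg'⟩ | ⟨hg,hg'⟩ | ⟨hg,hg'⟩⟩ |
    ⟨i, hg, hg'⟩ <;> subst hg <;> subst hg'
  -- 1a
  · refine revlex_of _ _ (DVar.xP k l hkl) (by rw [degE_g2, degE_g2]) ?_ ?_
    · rw [g2_eval_zero _ _ _ (xP_ne (Or.inl (ne_of_lt (hij.trans hjk))))
          (xP_ne (Or.inl (ne_of_lt hjk))),
        g2_eval_right _ _ (xP_ne (Or.inl (ne_of_lt (hij.trans hjk))))]
      omega
    · intro w hrw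
      rw [g2_eval_zero _ _ _
          (ne_of_rank_le (le_of_lt (rk_xP_lt_xP_right i j k l hij hkl (hjk.trans hkl))) hrw)
          (ne_of_rank_le (le_refl _) hrw),
        g2_eval_zero _ _ _
          (ne_of_rank_le (le_of_lt (rk_xP_lt_xP_right i k k l (hij.trans hjk) hkl hkl)) hrw)
          (ne_of_rank_le (le_of_lt (rk_xP_lt_xP_left j k l (hjk.trans hkl) hkl hjk)) hrw)]
  -- 1b
  · refine revlex_of _ _ (DVar.xP k l hkl) (by rw [degE_g2, degE_g2]) ?_ ?_
    · rw [g2_eval_zero _ _ _ (xP_ne (Or.inl (ne_of_lt (hij.trans hjk))))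
          (xP_ne (Or.inl (ne_of_lt hjk))),
        g2_eval_right _ _ (xP_ne (Or.inl (ne_of_lt (hij.trans hjk))))]
      omega
    · intro w hrw
      rw [g2_eval_zero _ _ _
          (ne_of_rank_le (le_of_lt (rk_xP_lt_xP_right i j k l hij hkl (hjk.trans hkl))) hrw)
          (ne_of_rank_le (le_refl _) hrw),
        g2_eval_zero _ _ _
          (ne_of_rank_le (le_of_lt (rk_xP_lt_xP_left i k l ((hij.trans hjk).trans hkl) hkl (hij.trans hjk))) hrw)
          (ne_of_rank_le (le_of_lt (rk_xP_lt_xP_right j k k l hjk hkl hkl)) hrw)]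
  -- 2a
  · refine revlex_of _ _ (DVar.xP j k hjk) (by rw [degE_g2, degE_g2]) ?_ ?_
    · rw [g2_eval_zero _ _ _ (xP_ne (Or.inl (ne_of_lt hij))) (xP_ne (Or.inl (ne_of_lt hij))),
        g2_eval_right _ _ (by simp)]
      omega
    · intro w hrw
      rw [g2_eval_zero _ _ _
          (ne_of_rank_le (le_of_lt (rk_xJ_lt_xP i j k hjk)) hrw)
          (ne_of_rank_le (le_refl _) hrw),
        g2_eval_zero _ _ _
          (ne_of_rank_le (le_of_lt (rk_xP_lt_xP_right i j j k hij hjk hjk)) hrw)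
          (ne_of_rank_le (le_of_lt (rk_xP_lt_xP_left i j k (hij.trans hjk) hjk hij)) hrw)]
  -- 2b
  · refine revlex_of _ _ (DVar.xP j k hjk) (by rw [degE_g2, degE_g2]) ?_ ?_
    · rw [g2_eval_zero _ _ _ (by simp) (xP_ne (Or.inl (ne_of_lt hij))),
        g2_eval_right _ _ (xP_ne (Or.inr (ne_of_lt hjk)))]
      omega
    · intro w hrw
      rw [g2_eval_zero _ _ _
          (ne_of_rank_le (le_of_lt (rk_xP_lt_xP_right i j j k hij hjk hjk)) hrw)
          (ne_of_rank_le (le_refl _) hrw),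
        g2_eval_zero _ _ _
          (ne_of_rank_le (le_of_lt (rk_xJ_lt_xP j j k hjk)) hrw)
          (ne_of_rank_le (le_of_lt (rk_xP_lt_xP_left i j k (hij.trans hjk) hjk hij)) hrw)]
  -- 2c
  · refine revlex_of _ _ (DVar.xP j k hjk) (by rw [degE_g2, degE_g2]) ?_ ?_
    · rw [g2_eval_zero _ _ _ (by simp) (xP_ne (Or.inl (ne_of_lt hij))),
        g2_eval_right _ _ (xP_ne (Or.inl (ne_of_lt hij)))]
      omega
    · intro w hrw
      rw [g2_eval_zero _ _ _
          (ne_of_rank_le (le_of_lt (rk_xP_lt_xP_left i j k (hij.trans hjk) hjk hij)) hrw)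
          (ne_of_rank_le (le_refl _) hrw),
        g2_eval_zero _ _ _
          (ne_of_rank_le (le_of_lt (rk_xJ_lt_xP k j k hjk)) hrw)
          (ne_of_rank_le (le_of_lt (rk_xP_lt_xP_right i j j k hij hjk hjk)) hrw)]
  -- 2d
  · refine revlex_of _ _ (DVar.y k) (by rw [degE_g2, degE_g2]) ?_ ?_
    · rw [g2_eval_zero _ _ _ (by simp) (y_ne (ne_of_lt (hij.trans hjk))),
        g2_eval_right _ _ (by simp)]
      omega
    · intro w hrw
      rw [g2_eval_zero _ _ _
          (ne_of_rank_le (le_of_lt (rk_lt_y _ k (fun u h => absurd h (by simp)))) hrw)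
          (ne_of_rank_le (le_refl _) hrw),
        g2_eval_zero _ _ _
          (ne_of_rank_le (le_of_lt (rk_lt_y _ k (fun u h => absurd h (by simp)))) hrw)
          (ne_of_rank_le (le_of_lt (rk_lt_y _ k (fun u h => by
            injection h with h1; exact h1 ▸ (hij.trans hjk)))) hrw)]
  -- 2e
  · refine revlex_of _ _ (DVar.y k) (by rw [degE_g2, degE_g2]) ?_ ?_
    · rw [g2_eval_zero _ _ _ (by simp) (y_ne (ne_of_lt hjk)),
        g2_eval_right _ _ (by simp)]
      omega
    · intro w hrw
      rw [g2_eval_zero _ _ _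
          (ne_of_rank_le (le_of_lt (rk_lt_y _ k (fun u h => absurd h (by simp)))) hrw)
          (ne_of_rank_le (le_refl _) hrw),
        g2_eval_zero _ _ _
          (ne_of_rank_le (le_of_lt (rk_lt_y _ k (fun u h => absurd h (by simp)))) hrw)
          (ne_of_rank_le (le_of_lt (rk_lt_y _ k (fun u h => by
            injection h with h1; exact h1 ▸ hjk))) hrw)]
  -- 3a
  · refine revlex_of _ _ (DVar.xP i j hij) (by rw [degE_single, degE_g2]) ?_ ?_
    · rw [g2_eval_zero _ _ _ (by simp) (by simp), Finsupp.single_eq_same]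
      omega
    · intro w hrw
      rw [single2_eval_zero _ _ (ne_of_rank_le (le_refl _) hrw),
        g2_eval_zero _ _ _
          (ne_of_rank_le (le_of_lt (rk_xJ_lt_xP i i j hij)) hrw)
          (ne_of_rank_le (le_of_lt (rk_xJ_lt_xP j i j hij)) hrw)]
  -- 3b
  · refine revlex_of _ _ (DVar.y j) (by rw [degE_g2, degE_g2]) ?_ ?_
    · rw [g2_eval_zero _ _ _ (by simp) (y_ne (ne_of_lt hij)),
        g2_eval_right _ _ (by simp)]
      omega
    · intro w hrw
      rw [g2_eval_zero _ _ _
          (ne_of_rank_le (le_of_lt (rk_lt_y _ j (fun u h => absurd h (by simp)))) hrw)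
          (ne_of_rank_le (le_refl _) hrw),
        g2_eval_zero _ _ _
          (ne_of_rank_le (le_of_lt (rk_lt_y _ j (fun u h => absurd h (by simp)))) hrw)
          (ne_of_rank_le (le_of_lt (rk_lt_y _ j (fun u h => by
            injection h with h1; exact h1 ▸ hij))) hrw)]
  -- 3c
  · refine revlex_of _ _ (DVar.y j) (by rw [degE_g2, degE_g2]) ?_ ?_
    · rw [g2_eval_zero _ _ _ (by simp) (y_ne (ne_of_lt hij)),
        g2_eval_right _ _ (by simp)]
      omega
    · intro w hrw
      rw [g2_eval_zero _ _ _
          (ne_of_rank_le (le_of_lt (rk_lt_y _ j (fun u h => absurd h (by simp)))) hrw)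
          (ne_of_rank_le (le_refl _) hrw),
        g2_eval_zero _ _ _
          (ne_of_rank_le (le_of_lt (rk_lt_y _ j (fun u h => absurd h (by simp)))) hrw)
          (ne_of_rank_le (le_of_lt (rk_lt_y _ j (fun u h => by
            injection h with h1; exact h1 ▸ hij))) hrw)]
  -- 3d
  · left
    show degE _ < degE _
    rw [degE_g2, degE_g3]
    omega
  -- 4
  · left
    show degE _ < degE _
    rw [degE_single, degE_g3]
    omega

end DW
namespace DW
open MvPolynomial Finsupp DVar

variable {m : ℕ}

lemma X_mul_X {K : Type*} [Field K] (a b : DVar m) :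
    (X a * X b : MvPolynomial (DVar m) K) = monomial (g2 a b) 1 := by
  rw [X, X, monomial_mul, g2, one_mul]

lemma X_mul_X_mul_X {K : Type*} [Field K] (a b c : DVar m) :
    (X a * X b * X c : MvPolynomial (DVar m) K) = monomial (g3 a b c) 1 := by
  rw [X, X, X, monomial_mul, monomial_mul, g3, one_mul, one_mul]

lemma X_sq {K : Type*} [Field K] (a : DVar m) :
    (X a ^ 2 : MvPolynomial (DVar m) K) = monomial (single a 2) 1 :=
  X_pow_eq_monomial

lemma gen_mem_inGD {K : Type*} [Field K] {g g' : DVar m →₀ ℕ} (h : IsGen m g g') :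
    monomial g (1:K) ∈ inGD K m := by
  rcases h with ⟨i,j,k,l,hij,hjk,hkl, ⟨hg,hg'⟩ | ⟨hg,hg'⟩⟩ |
    ⟨i,j,k,hij,hjk, ⟨hg,hg'⟩ | ⟨hg,hg'⟩ | ⟨hg,hg'⟩ | ⟨hg,hg'⟩ | ⟨hg,hg'⟩⟩ |
    ⟨i,j,hij, ⟨hg,hg'⟩ | ⟨hg,hg'⟩ | ⟨hg,hg'⟩ | ⟨hg,hg'⟩⟩ |
    ⟨i, hg, hg'⟩ <;> subst hg
  · exact Or.inl ⟨i,j,k,l,hij,hjk,hkl, Or.inl (X_mul_X _ _).symm⟩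
  · exact Or.inl ⟨i,j,k,l,hij,hjk,hkl, Or.inr (X_mul_X _ _).symm⟩
  · exact Or.inr (Or.inl ⟨i,j,k,hij,hjk, Or.inl (X_mul_X _ _).symm⟩)
  · exact Or.inr (Or.inl ⟨i,j,k,hij,hjk, Or.inr (Or.inl (X_mul_X _ _).symm)⟩)
  · exact Or.inr (Or.inl ⟨i,j,k,hij,hjk, Or.inr (Or.inr (Or.inl (X_mul_X _ _).symm))⟩)
  · exact Or.inr (Or.inl ⟨i,j,k,hij,hjk, Or.inr (Or.inr (Or.inr (Or.inl (X_mul_X _ _).symm)))⟩)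
  · exact Or.inr (Or.inl ⟨i,j,k,hij,hjk, Or.inr (Or.inr (Or.inr (Or.inr (X_mul_X _ _).symm)))⟩)
  · exact Or.inr (Or.inr (Or.inl ⟨i,j,hij, Or.inl (X_mul_X _ _).symm⟩))
  · exact Or.inr (Or.inr (Or.inl ⟨i,j,hij, Or.inr (Or.inl (X_mul_X _ _).symm)⟩))
  · exact Or.inr (Or.inr (Or.inl ⟨i,j,hij, Or.inr (Or.inr (Or.inl (X_mul_X _ _).symm))⟩))
  · exact Or.inr (Or.inr (Or.inl ⟨i,j,hij, Or.inr (Or.inr (Or.inr (X_mul_X_mul_X _ _ _).symm))⟩))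
  · exact Or.inr (Or.inr (Or.inr ⟨i, (X_mul_X_mul_X _ _ _).symm⟩))

lemma inGD_elim {K : Type*} [Field K] {p : MvPolynomial (DVar m) K} (h : p ∈ inGD K m) :
    ∃ g g', IsGen m g g' ∧ p = monomial g (1:K) := by
  rcases h with ⟨i,j,k,l,hij,hjk,hkl, h | h⟩ |
    ⟨i,j,k,hij,hjk, h | h | h | h | h⟩ |
    ⟨i,j,hij, h | h | h | h⟩ | ⟨i, h⟩
  · exact ⟨_, _, Or.inl ⟨i,j,k,l,hij,hjk,hkl, Or.inl ⟨rfl,rfl⟩⟩, by rw [h, X_mul_X]⟩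
  · exact ⟨_, _, Or.inl ⟨i,j,k,l,hij,hjk,hkl, Or.inr ⟨rfl,rfl⟩⟩, by rw [h, X_mul_X]⟩
  · exact ⟨_, _, Or.inr (Or.inl ⟨i,j,k,hij,hjk, Or.inl ⟨rfl,rfl⟩⟩), by rw [h, X_mul_X]⟩
  · exact ⟨_, _, Or.inr (Or.inl ⟨i,j,k,hij,hjk, Or.inr (Or.inl ⟨rfl,rfl⟩)⟩), by rw [h, X_mul_X]⟩
  · exact ⟨_, _, Or.inr (Or.inl ⟨i,j,k,hij,hjk, Or.inr (Or.inr (Or.inl ⟨rfl,rfl⟩))⟩),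
      by rw [h, X_mul_X]⟩
  · exact ⟨_, _, Or.inr (Or.inl ⟨i,j,k,hij,hjk, Or.inr (Or.inr (Or.inr (Or.inl ⟨rfl,rfl⟩)))⟩),
      by rw [h, X_mul_X]⟩
  · exact ⟨_, _, Or.inr (Or.inl ⟨i,j,k,hij,hjk, Or.inr (Or.inr (Or.inr (Or.inr ⟨rfl,rfl⟩)))⟩),
      by rw [h, X_mul_X]⟩
  · exact ⟨_, _, Or.inr (Or.inr (Or.inl ⟨i,j,hij, Or.inl ⟨rfl,rfl⟩⟩)), by rw [h, X_mul_X]⟩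
  · exact ⟨_, _, Or.inr (Or.inr (Or.inl ⟨i,j,hij, Or.inr (Or.inl ⟨rfl,rfl⟩)⟩)), by rw [h, X_mul_X]⟩
  · exact ⟨_, _, Or.inr (Or.inr (Or.inl ⟨i,j,hij, Or.inr (Or.inr (Or.inl ⟨rfl,rfl⟩))⟩)),
      by rw [h, X_mul_X]⟩
  · exact ⟨_, _, Or.inr (Or.inr (Or.inl ⟨i,j,hij, Or.inr (Or.inr (Or.inr ⟨rfl,rfl⟩))⟩)),
      by rw [h, X_mul_X_mul_X]⟩
  · exact ⟨_, _, Or.inr (Or.inr (Or.inr ⟨i, rfl, rfl⟩)), by rw [h, X_mul_X_mul_X]⟩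

lemma g2_le {d : DVar m →₀ ℕ} {a b : DVar m} (hab : a ≠ b) (ha : 0 < d a) (hb : 0 < d b) :
    g2 a b ≤ d := by
  classical
  rw [Finsupp.le_def]
  intro w
  by_cases hwa : a = w
  · subst hwa
    rw [g2_eval_left _ _ (Ne.symm hab)]
    omega
  · by_cases hwb : b = w
    · subst hwb
      rw [g2_eval_right _ _ hab]
      omega
    · rw [g2_eval_zero _ _ _ hwa hwb]
      omega

lemma g3_le {d : DVar m →₀ ℕ} {a b c : DVar m} (hab : a ≠ b) (hac : a ≠ c) (hbc : b ≠ c)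
    (ha : 0 < d a) (hb : 0 < d b) (hc : 0 < d c) : g3 a b c ≤ d := by
  classical
  rw [Finsupp.le_def]
  intro w
  rw [g3]
  simp only [Finsupp.coe_add, Pi.add_apply]
  by_cases hwa : a = w
  · subst hwa
    rw [Finsupp.single_eq_same, Finsupp.single_eq_of_ne' (Ne.symm hab),
      Finsupp.single_eq_of_ne' (Ne.symm hac)]
    omega
  · by_cases hwb : b = w
    · subst hwb
      rw [Finsupp.single_eq_same, Finsupp.single_eq_of_ne' hwa,
        Finsupp.single_eq_of_ne' (Ne.symm hbc)]
      omega
    · by_cases hwc : c = w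
      · subst hwc
        rw [Finsupp.single_eq_same, Finsupp.single_eq_of_ne' hwa, Finsupp.single_eq_of_ne' hwb]
        omega
      · rw [Finsupp.single_eq_of_ne' hwa, Finsupp.single_eq_of_ne' hwb,
          Finsupp.single_eq_of_ne' hwc]
        omega

/-- `d` is divisible by the leading exponent of one of the binomials of `𝒢` -/
def NonStd (m : ℕ) (d : DVar m →₀ ℕ) : Prop := ∃ g g', IsGen m g g' ∧ g ≤ d

section NS
variable {d : DVar m →₀ ℕ}

lemma ns1a (hd : ¬ NonStd m d) (i j k l : Fin (m-1)) (hij : i < j) (hjk : j < k) (hkl : k < l)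
    (hik : i < k) (hjl : j < l) : ¬(0 < d (DVar.xP i k hik) ∧ 0 < d (DVar.xP j l hjl)) := by
  rintro ⟨h1, h2⟩
  exact hd ⟨_, _, Or.inl ⟨i,j,k,l,hij,hjk,hkl, Or.inl ⟨rfl,rfl⟩⟩,
    g2_le (xP_ne (Or.inl (ne_of_lt hij))) h1 h2⟩

lemma ns1b (hd : ¬ NonStd m d) (i j k l : Fin (m-1)) (hij : i < j) (hjk : j < k) (hkl : k < l)
    (hil : i < l) : ¬(0 < d (DVar.xP i l hil) ∧ 0 < d (DVar.xP j k hjk)) := by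
  rintro ⟨h1, h2⟩
  exact hd ⟨_, _, Or.inl ⟨i,j,k,l,hij,hjk,hkl, Or.inr ⟨rfl,rfl⟩⟩,
    g2_le (xP_ne (Or.inl (ne_of_lt hij))) h1 h2⟩

lemma ns2a (hd : ¬ NonStd m d) (i j k : Fin (m-1)) (hij : i < j) (hjk : j < k)
    (hik : i < k) : ¬(0 < d (DVar.xP i j hij) ∧ 0 < d (DVar.xP i k hik)) := by
  rintro ⟨h1, h2⟩
  exact hd ⟨_, _, Or.inr (Or.inl ⟨i,j,k,hij,hjk, Or.inl ⟨rfl,rfl⟩⟩),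
    g2_le (xP_ne (Or.inr (ne_of_lt hjk))) h1 h2⟩

lemma ns2b (hd : ¬ NonStd m d) (i j k : Fin (m-1)) (hij : i < j) (hjk : j < k)
    (hik : i < k) : ¬(0 < d (DVar.xJ j) ∧ 0 < d (DVar.xP i k hik)) := by
  rintro ⟨h1, h2⟩
  exact hd ⟨_, _, Or.inr (Or.inl ⟨i,j,k,hij,hjk, Or.inr (Or.inl ⟨rfl,rfl⟩)⟩),
    g2_le (by simp) h1 h2⟩

lemma ns2c (hd : ¬ NonStd m d) (i j k : Fin (m-1)) (hij : i < j) (hjk : j < k) :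
    ¬(0 < d (DVar.xJ k) ∧ 0 < d (DVar.xP i j hij)) := by
  rintro ⟨h1, h2⟩
  exact hd ⟨_, _, Or.inr (Or.inl ⟨i,j,k,hij,hjk, Or.inr (Or.inr (Or.inl ⟨rfl,rfl⟩))⟩),
    g2_le (by simp) h1 h2⟩

lemma ns2d (hd : ¬ NonStd m d) (i j k : Fin (m-1)) (hij : i < j) (hjk : j < k) :
    ¬(0 < d (DVar.xP j k hjk) ∧ 0 < d (DVar.y i)) := by
  rintro ⟨h1, h2⟩
  exact hd ⟨_, _, Or.inr (Or.inl ⟨i,j,k,hij,hjk, Or.inr (Or.inr (Or.inr (Or.inl ⟨rfl,rfl⟩)))⟩),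
    g2_le (by simp) h1 h2⟩

lemma ns2e (hd : ¬ NonStd m d) (i j k : Fin (m-1)) (hij : i < j) (hjk : j < k)
    (hik : i < k) : ¬(0 < d (DVar.xP i k hik) ∧ 0 < d (DVar.y j)) := by
  rintro ⟨h1, h2⟩
  exact hd ⟨_, _, Or.inr (Or.inl ⟨i,j,k,hij,hjk, Or.inr (Or.inr (Or.inr (Or.inr ⟨rfl,rfl⟩)))⟩),
    g2_le (by simp) h1 h2⟩

lemma ns3a (hd : ¬ NonStd m d) (i j : Fin (m-1)) (hij : i < j) :
    ¬(0 < d (DVar.xJ i) ∧ 0 < d (DVar.xJ j)) := by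
  rintro ⟨h1, h2⟩
  exact hd ⟨_, _, Or.inr (Or.inr (Or.inl ⟨i,j,hij, Or.inl ⟨rfl,rfl⟩⟩)),
    g2_le (xJ_ne (ne_of_lt hij)) h1 h2⟩

lemma ns3b (hd : ¬ NonStd m d) (i j : Fin (m-1)) (hij : i < j) :
    ¬(0 < d (DVar.xJ j) ∧ 0 < d (DVar.y i)) := by
  rintro ⟨h1, h2⟩
  exact hd ⟨_, _, Or.inr (Or.inr (Or.inl ⟨i,j,hij, Or.inr (Or.inl ⟨rfl,rfl⟩)⟩)),
    g2_le (by simp) h1 h2⟩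

lemma ns3c (hd : ¬ NonStd m d) (i j : Fin (m-1)) (hij : i < j) :
    ¬(0 < d (DVar.xP i j hij) ∧ 0 < d (DVar.y i)) := by
  rintro ⟨h1, h2⟩
  exact hd ⟨_, _, Or.inr (Or.inr (Or.inl ⟨i,j,hij, Or.inr (Or.inr (Or.inl ⟨rfl,rfl⟩))⟩)),
    g2_le (by simp) h1 h2⟩

lemma ns3d (hd : ¬ NonStd m d) (i j : Fin (m-1)) (hij : i < j) :
    ¬(0 < d (DVar.xP i j hij) ∧ 0 < d DVar.x1 ∧ 0 < d DVar.xn) := by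
  rintro ⟨h1, h2, h3⟩
  exact hd ⟨_, _, Or.inr (Or.inr (Or.inl ⟨i,j,hij, Or.inr (Or.inr (Or.inr ⟨rfl,rfl⟩))⟩)),
    g3_le (by simp) (by simp) (by simp) h1 h2 h3⟩

lemma ns4 (hd : ¬ NonStd m d) (i : Fin (m-1)) :
    ¬(0 < d (DVar.xJ i) ∧ 0 < d DVar.x1 ∧ 0 < d DVar.xn) := by
  rintro ⟨h1, h2, h3⟩
  exact hd ⟨_, _, Or.inr (Or.inr (Or.inr ⟨i, rfl, rfl⟩)),
    g3_le (by simp) (by simp) (by simp) h1 h2 h3⟩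

end NS

lemma nonstd_mono {d e : DVar m →₀ ℕ} (h : e ≤ d) (hn : NonStd m e) : NonStd m d := by
  obtain ⟨g, g', hgen, hle⟩ := hn
  exact ⟨g, g', hgen, le_trans hle h⟩

lemma descent {d : DVar m →₀ ℕ} (hnst : NonStd m d) :
    ∃ e, AD m e = AD m d ∧ degRevLexLT (rankD m) e d := by
  obtain ⟨g, g', hgen, hle⟩ := hnst
  have hcancel : d - g + g = d := tsub_add_cancel_of_le hle
  refine ⟨d - g + g', ?_, ?_⟩
  · rw [AD_add, ← gen_arel hgen, ← AD_add, hcancel]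
  · have h := prec_add_left (d - g) (gen_prec hgen)
    rwa [hcancel] at h

end DW
namespace DW
open MvPolynomial Finsupp DVar

variable {m : ℕ}

lemma xJc_le_coord (d : DVar m →₀ ℕ) (t : Fin (m-1)) :
    d (DVar.xJc t) ≤ AD m d (2*t.val+2) := by
  have hl := term_le m d (DVar.xJc t) (2*t.val+2)
  have hw : wD m (DVar.xJc t) (2*t.val+2) = 1 := by
    simp [wD, Finsupp.single_apply]
  rw [hw] at hl; omega

lemma Y_exists {d : DVar m →₀ ℕ} (h : 0 < ∑ t : Fin (m-1), d (DVar.y t)) :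
    ∃ t, 0 < d (DVar.y t) := by
  by_contra hc
  push_neg at hc
  have : (∑ t : Fin (m-1), d (DVar.y t)) = 0 :=
    Finset.sum_eq_zero (fun t _ => by have := hc t; omega)
  omega

lemma Y_transfer_aux {d e : DVar m →₀ ℕ} (hd : ¬NonStd m d)
    (hA : AD m d = AD m e)
    (hlt : (∑ t : Fin (m-1), d (DVar.y t)) < ∑ t : Fin (m-1), e (DVar.y t)) : False := by
  have h1 := coord1 d
  have h1' := coord1 e
  have hn := coordn d
  have hn' := coordn e
  rw [hA] at h1 hn
  have hx1 : 0 < d DVar.x1 := by omega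
  have hxn : 0 < d DVar.xn := by omega
  have hP : ∀ s u (h : s < u), d (DVar.xP s u h) = 0 := by
    intro s u h
    by_contra hpos
    exact ns3d hd s u h ⟨Nat.pos_of_ne_zero hpos, hx1, hxn⟩
  have hJ : ∀ u, d (DVar.xJ u) = 0 := by
    intro u
    by_contra hpos
    exact ns4 hd u ⟨Nat.pos_of_ne_zero hpos, hx1, hxn⟩
  have hpt : ∀ t, e (DVar.y t) ≤ d (DVar.y t) := by
    intro t
    have h2 := coord_odd_y d t hP hJ
    have h3 := y_le_coord_odd e t
    rw [hA] at h2
    omega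
  have : (∑ t : Fin (m-1), e (DVar.y t)) ≤ ∑ t : Fin (m-1), d (DVar.y t) :=
    Finset.sum_le_sum (fun t _ => hpt t)
  omega

lemma Y_transfer {d e : DVar m →₀ ℕ} (hd : ¬NonStd m d) (he : ¬NonStd m e)
    (hA : AD m d = AD m e) :
    (∑ t : Fin (m-1), d (DVar.y t)) = ∑ t : Fin (m-1), e (DVar.y t) := by
  rcases lt_trichotomy (∑ t : Fin (m-1), d (DVar.y t)) (∑ t : Fin (m-1), e (DVar.y t))
    with h | h | h
  · exact absurd (Y_transfer_aux hd hA h) (fun x => x)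
  · exact h
  · exact absurd (Y_transfer_aux he hA.symm h) (fun x => x)

lemma L_yF {d : DVar m →₀ ℕ} (hd : ¬NonStd m d) (M : Fin (m-1))
    (hM : 0 < AD m d (2*M.val+3))
    (hmax : ∀ t, 0 < AD m d (2*t.val+3) → t ≤ M)
    (hY : 0 < ∑ t : Fin (m-1), d (DVar.y t)) : 0 < d (DVar.y M) := by
  obtain ⟨t0, ht0⟩ := Y_exists hY
  have ht0M : t0 ≤ M := hmax t0 (lt_of_lt_of_le ht0 (y_le_coord_odd d t0))
  rcases source_odd hM with hJ | hy | ⟨s, hs, hp⟩ | ⟨u, hu, hp⟩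
  · rcases eq_or_lt_of_le ht0M with heq | hlt
    · exact heq ▸ ht0
    · exact absurd ⟨hJ, ht0⟩ (ns3b hd t0 M hlt)
  · exact hy
  · rcases lt_trichotomy t0 s with h1 | h1 | h1
    · exact absurd ⟨hp, ht0⟩ (ns2d hd t0 s M h1 hs)
    · subst h1
      exact absurd ⟨hp, ht0⟩ (ns3c hd t0 M hs)
    · rcases eq_or_lt_of_le ht0M with heq | hlt
      · exact heq ▸ ht0
      · exact absurd ⟨hp, ht0⟩ (ns2e hd s t0 M h1 hlt hs)
  · have : u ≤ M := hmax u (lt_of_lt_of_le hp (xP_le_coord_right d M u hu))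
    exact absurd hu (by omega)

lemma L_xJF {d : DVar m →₀ ℕ} (M : Fin (m-1))
    (hM : 0 < AD m d (2*M.val+3))
    (hsingle : ∀ t, 0 < AD m d (2*t.val+3) → t = M)
    (hY0 : ∀ t, d (DVar.y t) = 0) : 0 < d (DVar.xJ M) := by
  rcases source_odd hM with hJ | hy | ⟨s, hs, hp⟩ | ⟨u, hu, hp⟩
  · exact hJ
  · rw [hY0 M] at hy; omega
  · have : s = M := hsingle s (lt_of_lt_of_le hp (xP_le_coord_left d s M hs))
    exact absurd hs (by omega)
  · have : u = M := hsingle u (lt_of_lt_of_le hp (xP_le_coord_right d M u hu))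
    exact absurd hu (by omega)

lemma L_pairF {d : DVar m →₀ ℕ} (hd : ¬NonStd m d) (M s' : Fin (m-1)) (hsM : s' < M)
    (hM : 0 < AD m d (2*M.val+3)) (hs : 0 < AD m d (2*s'.val+3))
    (hmax : ∀ t, 0 < AD m d (2*t.val+3) → t ≤ M)
    (hmax2 : ∀ t, 0 < AD m d (2*t.val+3) → t ≠ M → t ≤ s')
    (hY0 : ∀ t, d (DVar.y t) = 0) : 0 < d (DVar.xP s' M hsM) := by
  -- source at M
  have hMsrc : 0 < d (DVar.xJ M) ∨ ∃ ℓ, ∃ hℓ : ℓ < M, 0 < d (DVar.xP ℓ M hℓ) := by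
    rcases source_odd hM with hJ | hy | ⟨ℓ, hℓ, hp⟩ | ⟨u, hu, hp⟩
    · exact Or.inl hJ
    · rw [hY0 M] at hy; omega
    · exact Or.inr ⟨ℓ, hℓ, hp⟩
    · have : u ≤ M := hmax u (lt_of_lt_of_le hp (xP_le_coord_right d M u hu))
      exact absurd hu (by omega)
  rcases source_odd hs with hJs | hys | ⟨x, hx, hpx⟩ | ⟨u, hu, hpu⟩
  · -- xJ at s'
    rcases hMsrc with hJM | ⟨ℓ, hℓ, hpℓ⟩
    · exact absurd ⟨hJs, hJM⟩ (ns3a hd s' M hsM)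
    · rcases lt_trichotomy ℓ s' with h1 | h1 | h1
      · exact absurd ⟨hJs, hpℓ⟩ (ns2b hd ℓ s' M h1 hsM hℓ)
      · subst h1; exact hpℓ
      · have : ℓ ≤ s' := hmax2 ℓ (lt_of_lt_of_le hpℓ (xP_le_coord_left d ℓ M hℓ))
          (by omega)
        omega
  · rw [hY0 s'] at hys; omega
  · -- pair (x, s')
    rcases hMsrc with hJM | ⟨ℓ, hℓ, hpℓ⟩
    · exact absurd ⟨hJM, hpx⟩ (ns2c hd x s' M hx hsM)
    · rcases lt_trichotomy ℓ x with h1 | h1 | h1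
      · exact absurd ⟨hpℓ, hpx⟩ (ns1b hd ℓ x s' M h1 hx hsM hℓ)
      · subst h1
        exact absurd ⟨hpx, hpℓ⟩ (ns2a hd ℓ s' M hx hsM hℓ)
      · rcases lt_trichotomy ℓ s' with h2 | h2 | h2
        · exact absurd ⟨hpx, hpℓ⟩ (ns1a hd x ℓ s' M h1 h2 hsM hx hℓ)
        · subst h2; exact hpℓ
        · have : ℓ ≤ s' := hmax2 ℓ (lt_of_lt_of_le hpℓ (xP_le_coord_left d ℓ M hℓ))
            (by omega)
          omega
  · -- pair (s', u)
    have huM : u ≤ M := hmax u (lt_of_lt_of_le hpu (xP_le_coord_right d s' u hu))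
    rcases eq_or_lt_of_le huM with heq | hlt
    · subst heq; exact hpu
    · have : u ≤ s' := hmax2 u (lt_of_lt_of_le hpu (xP_le_coord_right d s' u hu)) (by omega)
      omega

lemma forced (hm : 2 ≤ m) {d e : DVar m →₀ ℕ} (hd : ¬NonStd m d) (he : ¬NonStd m e)
    (hA : AD m d = AD m e) (hne : d ≠ 0) : ∃ v, 0 < d v ∧ 0 < e v := by
  classical
  by_cases hev : ∃ t : Fin (m-1), 0 < AD m d (2*t.val+2)
  · obtain ⟨t, ht⟩ := hev
    exact ⟨DVar.xJc t, source_even ht, source_even (hA ▸ ht)⟩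
  by_cases hodd : ∃ t : Fin (m-1), 0 < AD m d (2*t.val+3)
  · set S := Finset.univ.filter (fun t : Fin (m-1) => 0 < AD m d (2*t.val+3)) with hS
    have hSne : S.Nonempty := by
      obtain ⟨t, ht⟩ := hodd
      exact ⟨t, by rw [hS]; simp [ht]⟩
    set M := S.max' hSne with hMdef
    have hMS : M ∈ S := S.max'_mem hSne
    have hM : 0 < AD m d (2*M.val+3) := by
      rw [hS] at hMS; simpa using hMS
    have hmax : ∀ t, 0 < AD m d (2*t.val+3) → t ≤ M := by
      intro t ht
      exact S.le_max' t (by rw [hS]; simp [ht])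
    have hYt := Y_transfer hd he hA
    by_cases hY : 0 < ∑ t : Fin (m-1), d (DVar.y t)
    · refine ⟨DVar.y M, L_yF hd M hM hmax hY, ?_⟩
      have hmax' : ∀ t, 0 < AD m e (2*t.val+3) → t ≤ M := by
        intro t ht; exact hmax t (by rwa [hA])
      exact L_yF he M (hA ▸ hM) hmax' (by omega)
    · have hY0d : ∀ t, d (DVar.y t) = 0 := by
        intro t
        have h1 : d (DVar.y t) ≤ ∑ u : Fin (m-1), d (DVar.y u) :=
          Finset.single_le_sum (f := fun u => d (DVar.y u)) (fun _ _ => Nat.zero_le _)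
            (Finset.mem_univ t)
        omega
      have hY0e : ∀ t, e (DVar.y t) = 0 := by
        intro t
        have h1 : e (DVar.y t) ≤ ∑ u : Fin (m-1), e (DVar.y u) :=
          Finset.single_le_sum (f := fun u => e (DVar.y u)) (fun _ _ => Nat.zero_le _)
            (Finset.mem_univ t)
        omega
      by_cases hs2 : ((S.erase M).Nonempty)
      · set s' := (S.erase M).max' hs2 with hsdef
        have hs'mem : s' ∈ S.erase M := (S.erase M).max'_mem hs2
        have hs'S : s' ∈ S := Finset.mem_of_mem_erase hs'mem
        have hs'ne : s' ≠ M := Finset.ne_of_mem_erase hs'mem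
        have hs'le : s' ≤ M := S.le_max' s' hs'S
        have hs'M : s' < M := lt_of_le_of_ne hs'le hs'ne
        have hs' : 0 < AD m d (2*s'.val+3) := by
          rw [hS] at hs'S; simpa using hs'S
        have hmax2 : ∀ t, 0 < AD m d (2*t.val+3) → t ≠ M → t ≤ s' := by
          intro t ht htM
          exact (S.erase M).le_max' t (Finset.mem_erase.mpr ⟨htM, by rw [hS]; simp [ht]⟩)
        refine ⟨DVar.xP s' M hs'M, L_pairF hd M s' hs'M hM hs' hmax hmax2 hY0d, ?_⟩
        have hmax' : ∀ t, 0 < AD m e (2*t.val+3) → t ≤ M := fun t ht => hmax t (by rwa [hA])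
        have hmax2' : ∀ t, 0 < AD m e (2*t.val+3) → t ≠ M → t ≤ s' :=
          fun t ht => hmax2 t (by rwa [hA])
        exact L_pairF he M s' hs'M (hA ▸ hM) (hA ▸ hs') hmax' hmax2' hY0e
      · have hsingle : ∀ t, 0 < AD m d (2*t.val+3) → t = M := by
          intro t ht
          by_contra htM
          exact hs2 ⟨t, Finset.mem_erase.mpr ⟨htM, by rw [hS]; simp [ht]⟩⟩
        refine ⟨DVar.xJ M, L_xJF M hM hsingle hY0d, ?_⟩
        have hsingle' : ∀ t, 0 < AD m e (2*t.val+3) → t = M :=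
          fun t ht => hsingle t (by rwa [hA])
        exact L_xJF M (hA ▸ hM) hsingle' hY0e
  · push_neg at hodd
    push_neg at hev
    have hoddz : ∀ t : Fin (m-1), AD m d (2*t.val+3) = 0 := fun t => by have := hodd t; omega
    have hY0 : (∑ t : Fin (m-1), d (DVar.y t)) = 0 := by
      have h1 := coord1 d
      by_cases h : 0 < AD m d 1
      · rcases source_one h with hx | ⟨t, ht⟩
        · -- fine, still need the sum being zero; derive from odd coords
          have : ∀ t : Fin (m-1), d (DVar.y t) = 0 := by
            intro t
            have := y_le_coord_odd d t
            have := hoddz t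
            omega
          exact Finset.sum_eq_zero (fun t _ => this t)
        · have := y_le_coord_odd d t
          have := hoddz t
          omega
      · have : ∀ t : Fin (m-1), d (DVar.y t) = 0 := by
          intro t
          have := y_le_coord_odd d t
          have := hoddz t
          omega
        exact Finset.sum_eq_zero (fun t _ => this t)
    by_cases h1 : 0 < AD m d 1
    · refine ⟨DVar.x1, ?_, ?_⟩
      · rcases source_one h1 with hx | ⟨t, ht⟩
        · exact hx
        · have := y_le_coord_odd d t; have := hoddz t; omega
      · rcases source_one (hA ▸ h1) with hx | ⟨t, ht⟩
        · exact hx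
        · have h2 := y_le_coord_odd e t
          have h3 := hoddz t
          rw [hA] at h3
          omega
    by_cases hn : 0 < AD m d (2*m)
    · refine ⟨DVar.xn, ?_, ?_⟩
      · rcases source_n hn with hx | ⟨t, ht⟩
        · exact hx
        · have := y_le_coord_odd d t; have := hoddz t; omega
      · rcases source_n (hA ▸ hn) with hx | ⟨t, ht⟩
        · exact hx
        · have h2 := y_le_coord_odd e t
          have h3 := hoddz t
          rw [hA] at h3
          omega
    · exfalso
      apply hne
      ext v
      simp only [Finsupp.coe_zero, Pi.zero_apply]
      cases v with
      | x1 =>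
        have := coord1 d
        omega
      | xn =>
        have := coordn d
        omega
      | xJ t =>
        have := xJ_le_coord d t
        have := hoddz t
        omega
      | xJc t =>
        have h2 := xJc_le_coord d t
        have h3 := hev t
        omega
      | xP s u h =>
        have h2 := xP_le_coord_left d s u h
        have := hoddz s
        omega
      | y t =>
        have := y_le_coord_odd d t
        have := hoddz t
        omega

end DW
namespace DW
open MvPolynomial Finsupp DVar

variable {m : ℕ}

lemma std_inj (hm : 2 ≤ m) : ∀ (N : ℕ) (d e : DVar m →₀ ℕ), degE d ≤ N →
    ¬NonStd m d → ¬NonStd m e → AD m d = AD m e → d = e := by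
  intro N
  induction N with
  | zero =>
    intro d e hdeg hd he hA
    have hd0 : d = 0 := degE_eq_zero (by omega)
    subst hd0
    have h0 : AD m e = 0 := by rw [← hA, AD_zero]
    rw [AD_eq_zero h0]
  | succ N ih =>
    intro d e hdeg hd he hA
    by_cases h0 : d = 0
    · subst h0
      have h1 : AD m e = 0 := by rw [← hA, AD_zero]
      rw [AD_eq_zero h1]
    · obtain ⟨v, hdv, hev⟩ := forced hm hd he hA h0
      have hsd : single v 1 ≤ d := Finsupp.single_le_iff.mpr (by omega)
      have hse : single v 1 ≤ e := Finsupp.single_le_iff.mpr (by omega)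
      have hd'add : d - single v 1 + single v 1 = d := tsub_add_cancel_of_le hsd
      have he'add : e - single v 1 + single v 1 = e := tsub_add_cancel_of_le hse
      have hA' : AD m (d - single v 1) = AD m (e - single v 1) := by
        have h2 : AD m (d - single v 1) + AD m (single v 1)
            = AD m (e - single v 1) + AD m (single v 1) := by
          rw [← AD_add, ← AD_add, hd'add, he'add, hA]
        exact add_right_cancel h2
      have hdeg' : degE (d - single v 1) ≤ N := by
        have h3 : degE (d - single v 1) + 1 = degE d := by
          conv_rhs => rw [← hd'add]
          rw [degE_add, degE_single]
        omega
      have hstd' : ¬NonStd m (d - single v 1) :=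
        fun hn => hd (nonstd_mono tsub_le_self hn)
      have hste' : ¬NonStd m (e - single v 1) :=
        fun hn => he (nonstd_mono tsub_le_self hn)
      have heq := ih (d - single v 1) (e - single v 1) hdeg' hstd' hste' hA'
      rw [← hd'add, ← he'add, heq]

lemma std_not_prec (hm : 2 ≤ m) {d e : DVar m →₀ ℕ} (hd : ¬NonStd m d)
    (hA : AD m e = AD m d) (hprec : degRevLexLT (rankD m) e d) : False := by
  classical
  set D := degE (AD m d) with hD
  have hdegd : degE d ≤ D := by rw [hD]; exact degE_le_degE_AD d
  have key : ∀ n : ℕ, ∀ e' : DVar m →₀ ℕ, PhiM m D e' ≤ n → AD m e' = AD m d →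
      PhiM m D d ≤ PhiM m D e' := by
    intro n
    induction n with
    | zero =>
      intro e' hp hAe
      by_cases hne : NonStd m e'
      · obtain ⟨e'', hA'', hprec''⟩ := descent hne
        have hAe'' : AD m e'' = AD m d := by rw [hA'', hAe]
        have hde : degE e' ≤ D := by rw [hD, ← hAe]; exact degE_le_degE_AD e'
        have hde'' : degE e'' ≤ D := by rw [hD, ← hAe'']; exact degE_le_degE_AD e''
        have hlt := prec_phi hm D hprec'' hde'' hde
        omega
      · rw [std_inj hm (degE e') e' d (le_refl _) hne hd hAe]
    | succ n ihn =>
      intro e' hp hAe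
      by_cases hne : NonStd m e'
      · obtain ⟨e'', hA'', hprec''⟩ := descent hne
        have hAe'' : AD m e'' = AD m d := by rw [hA'', hAe]
        have hde : degE e' ≤ D := by rw [hD, ← hAe]; exact degE_le_degE_AD e'
        have hde'' : degE e'' ≤ D := by rw [hD, ← hAe'']; exact degE_le_degE_AD e''
        have hlt := prec_phi hm D hprec'' hde'' hde
        have := ihn e'' (by omega) hAe''
        omega
      · rw [std_inj hm (degE e') e' d (le_refl _) hne hd hAe]
  have h1 := key (PhiM m D e) e (le_refl _) hA
  have h2 := prec_phi hm D hprec (by rw [hD, ← hA]; exact degE_le_degE_AD e) hdegd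
  omega

lemma piD_monomial {K : Type*} [Field K] (d : DVar m →₀ ℕ) (c : K) :
    piD K m (monomial d c) = monomial (AD m d) c := by
  classical
  rw [piD, aeval_monomial]
  have hprod : (d.prod fun v k => (dImage K m v) ^ k) = monomial (AD m d) (1:K) := by
    induction d using Finsupp.induction with
    | zero => simp
    | single_add v k rest hvr hk ih =>
      rw [Finsupp.prod_add_index' (by intro a; rw [pow_zero])
            (by intro a b1 b2; rw [pow_add]),
        Finsupp.prod_single_index (by rw [pow_zero]), ih, dImage_eq, monomial_pow,
        one_pow, monomial_mul, one_mul, AD_add, AD_single]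
  rw [hprod]
  rw [algebraMap_eq, C_mul_monomial, mul_one]

lemma lead_nonstd {K : Type*} [Field K] (hm : 2 ≤ m) {f : MvPolynomial (DVar m) K}
    (hker : f ∈ RingHom.ker (piD K m)) (hf0 : f ≠ 0) {d : DVar m →₀ ℕ}
    (hlead : IsLeadExp (precEven m) f d) : NonStd m d := by
  classical
  by_contra hstd
  obtain ⟨hdsupp, hmax⟩ := hlead
  have hpi : piD K m f = 0 := hker
  have h0 : (0:K) = ∑ e ∈ f.support, (if AD m e = AD m d then coeff e f else 0) := by
    calc (0:K) = coeff (AD m d) (piD K m f) := by rw [hpi]; simp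
    _ = coeff (AD m d) (∑ e ∈ f.support, monomial (AD m e) (coeff e f)) := by
        conv_lhs => rw [← support_sum_monomial_coeff f]
        rw [map_sum]
        congr 1
        refine Finset.sum_congr rfl (fun e _ => ?_)
        rw [piD_monomial]
    _ = ∑ e ∈ f.support, (if AD m e = AD m d then coeff e f else 0) := by
        rw [coeff_sum]
        refine Finset.sum_congr rfl (fun e _ => ?_)
        rw [coeff_monomial]
  have hex : ∃ e ∈ f.support, e ≠ d ∧ AD m e = AD m d := by
    by_contra hc
    push_neg at hc
    have hsum : (∑ e ∈ f.support, (if AD m e = AD m d then coeff e f else 0)) = coeff d f := by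
      rw [Finset.sum_eq_single d]
      · rw [if_pos rfl]
      · intro e hesupp hedne
        rw [if_neg (hc e hesupp hedne)]
      · intro hd'; exact absurd hdsupp hd'
    have hcoef : coeff d f ≠ 0 := MvPolynomial.mem_support_iff.mp hdsupp
    rw [hsum] at h0
    exact hcoef h0.symm
  obtain ⟨e, hesupp, hedne, hAe⟩ := hex
  exact std_not_prec hm hstd hAe (hmax e hesupp hedne)

lemma g2_le_one {a b : DVar m} (hab : a ≠ b) (v : DVar m) : g2 a b v ≤ 1 := by
  classical
  by_cases hva : a = v
  · subst hva
    rw [g2_eval_left _ _ (Ne.symm hab)]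
  · by_cases hvb : b = v
    · subst hvb
      rw [g2_eval_right _ _ hab]
    · rw [g2_eval_zero _ _ _ hva hvb]
      omega

lemma g3_le_one {a b c : DVar m} (hab : a ≠ b) (hac : a ≠ c) (hbc : b ≠ c) (v : DVar m) :
    g3 a b c v ≤ 1 := by
  classical
  rw [g3]
  simp only [Finsupp.coe_add, Pi.add_apply]
  by_cases hva : a = v
  · subst hva
    rw [Finsupp.single_eq_same, Finsupp.single_eq_of_ne' (Ne.symm hab),
      Finsupp.single_eq_of_ne' (Ne.symm hac)]
    omega
  · by_cases hvb : b = v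
    · subst hvb
      rw [Finsupp.single_eq_same, Finsupp.single_eq_of_ne' hva,
        Finsupp.single_eq_of_ne' (Ne.symm hbc)]
      omega
    · by_cases hvc : c = v
      · subst hvc
        rw [Finsupp.single_eq_same, Finsupp.single_eq_of_ne' hva, Finsupp.single_eq_of_ne' hvb]
        omega
      · rw [Finsupp.single_eq_of_ne' hva, Finsupp.single_eq_of_ne' hvb,
          Finsupp.single_eq_of_ne' hvc]
        omega

lemma gen_lead_sf {g g' : DVar m →₀ ℕ} (h : IsGen m g g') : ∀ v, g v ≤ 1 := by
  rcases h with ⟨i,j,k,l,hij,hjk,hkl, ⟨hg,hg'⟩ | ⟨hg,hg'⟩⟩ |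
    ⟨i,j,k,hij,hjk, ⟨hg,hg'⟩ | ⟨hg,hg'⟩ | ⟨hg,hg'⟩ | ⟨hg,hg'⟩ | ⟨hg,hg'⟩⟩ |
    ⟨i,j,hij, ⟨hg,hg'⟩ | ⟨hg,hg'⟩ | ⟨hg,hg'⟩ | ⟨hg,hg'⟩⟩ |
    ⟨i, hg, hg'⟩ <;> subst hg
  · exact g2_le_one (xP_ne (Or.inl (ne_of_lt hij)))
  · exact g2_le_one (xP_ne (Or.inl (ne_of_lt hij)))
  · exact g2_le_one (xP_ne (Or.inr (ne_of_lt hjk)))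
  · exact g2_le_one (by simp)
  · exact g2_le_one (by simp)
  · exact g2_le_one (by simp)
  · exact g2_le_one (by simp)
  · exact g2_le_one (xJ_ne (ne_of_lt hij))
  · exact g2_le_one (by simp)
  · exact g2_le_one (by simp)
  · exact g3_le_one (by simp) (by simp) (by simp)
  · exact g3_le_one (by simp) (by simp) (by simp)

lemma gen_ne {g g' : DVar m →₀ ℕ} (h : IsGen m g g') : g ≠ g' := by
  have hprec := gen_prec h
  rcases hprec with h1 | ⟨hdeg, v, hv, _⟩
  · intro hc; rw [hc] at h1; exact lt_irrefl _ h1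
  · intro hc; rw [hc] at hv; omega

end DW

/-- the initial ideal of `I_{D_{2m}}` with respect to `≻^even` is generated by
the explicit set `in(𝒢_{D_{2m}})` of first-written monomials of the binomials of
`𝒢_{D_{2m}}`, and each of these monomials is squarefree. -/
theorem initial_ideal_GD_squarefree (K : Type*) [Field K] (m : ℕ) (hm : 2 ≤ m) :
    initialIdeal (precEven m) (RingHom.ker (piD K m)) = Ideal.span (inGD K m) ∧
      ∀ p ∈ inGD K m, ∃ d : DVar m →₀ ℕ, p = monomial d (1 : K) ∧ ∀ v, d v ≤ 1 := by
  classical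
  constructor
  · apply le_antisymm
    · rw [initialIdeal]
      apply Ideal.span_le.mpr
      rintro p ⟨f, hfI, hf0, dd, hlead, rfl⟩
      have hnst : DW.NonStd m dd := DW.lead_nonstd hm hfI hf0 hlead
      obtain ⟨g, g', hgen, hle⟩ := hnst
      have hsplit : monomial dd (1:K) = monomial (dd - g) 1 * monomial g 1 := by
        rw [monomial_mul, one_mul, tsub_add_cancel_of_le hle]
      rw [hsplit]
      exact Ideal.mul_mem_left _ _ (Ideal.subset_span (DW.gen_mem_inGD hgen))
    · apply Ideal.span_le.mpr
      intro p hp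
      obtain ⟨g, g', hgen, rfl⟩ := DW.inGD_elim hp
      have hne : g ≠ g' := DW.gen_ne hgen
      apply Ideal.subset_span
      refine ⟨monomial g 1 - monomial g' 1, ?_, ?_, g, ⟨?_, ?_⟩, rfl⟩
      · show piD K m _ = 0
        rw [map_sub, DW.piD_monomial, DW.piD_monomial, DW.gen_arel hgen, sub_self]
      · intro hc
        have h1 : (monomial g (1:K)) = monomial g' 1 := sub_eq_zero.mp hc
        have h2 := congrArg (coeff g) h1
        rw [coeff_monomial, coeff_monomial, if_pos rfl, if_neg (Ne.symm hne)] at h2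
        exact one_ne_zero h2
      · rw [MvPolynomial.mem_support_iff, coeff_sub, coeff_monomial, coeff_monomial,
          if_pos rfl, if_neg (Ne.symm hne)]
        simp
      · intro e hesupp hedne
        have he : e = g' := by
          by_contra hc
          rw [MvPolynomial.mem_support_iff, coeff_sub, coeff_monomial, coeff_monomial,
            if_neg (fun h => hedne h.symm), if_neg (fun h => hc h.symm)] at hesupp
          simp at hesupp
        subst he
        exact DW.gen_prec hgen
  · intro p hp
    obtain ⟨g, g', hgen, rfl⟩ := DW.inGD_elim hp
    exact ⟨g, rfl, DW.gen_lead_sf hgen⟩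
end
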